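/- arXiv:2007.07576 — 2 statements merged into one kernel-verified Lean document; each statement's English description precedes it below -/
import Mathlib

section
/- Let B, C be categories, F₁ : B^{α¹} → C, F₂ : B^{α²} → C, F₃ : B^{α³} → C functors, φ : F₁ → F₂ a transformation of type |α¹| —σ₁→ k₁ ←τ₁— |α²| and ψ : F₂ → F₃ a transformation of type |α²| —σ₂→ k₂ ←τ₂— |α³|, both dinatural in all of their variables. Suppose the pushout of τ₁ and σ₂ defining the type of ψ∘φ has vertex l = 1, i.e. ψ∘φ depends on only one variable. If the composite graph Γ(ψ) ∘ Γ(φ) is acyclic, then ψ∘φ is dinatural (in its unique variable). -/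
open CategoryTheory Opposite

universe v u v' u'

/-- `SignObj B s` is `B` if the sign `s` is `true` (covariant) and `Bᵒᵖ` if `s` is `false`. -/
def SignObj (B : Type u) : Bool → Type u
  | true => B
  | false => Bᵒᵖ

instance signObjCategory (B : Type u) [Category.{v} B] : ∀ s : Bool, Category.{v} (SignObj B s)
  | true => inferInstanceAs (Category.{v} B)
  | false => inferInstanceAs (Category.{v} Bᵒᵖ)

/-- Interpret an object of `B` as an object of `B` or `Bᵒᵖ`, according to a sign. -/
def toSign {B : Type u} : ∀ s : Bool, B → SignObj B s
  | true, X => X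
  | false, X => op X

/-- Forget the sign of an object. -/
def unSign {B : Type u} : ∀ {s : Bool}, SignObj B s → B
  | true, X => X
  | false, X => unop X

/-- A morphism of `B`, pointing in a direction prescribed by a sign. -/
def SignHom {B : Type u} [Category.{v} B] : Bool → B → B → Type v
  | true, X, Y => X ⟶ Y
  | false, X, Y => Y ⟶ X

def toSignHom {B : Type u} [Category.{v} B] : ∀ {s : Bool} {X Y : B},
    SignHom s X Y → (toSign s X ⟶ toSign s Y)
  | true, _, _, f => f
  | false, _, _, f => f.op

def signId {B : Type u} [Category.{v} B] : ∀ (s : Bool) (X : B), SignHom s X X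
  | true, X => 𝟙 X
  | false, X => 𝟙 X

/-- The mixed-variance power category `B^α`. -/
abbrev PowCat (B : Type u) [Category.{v} B] {κ : Type} (α : κ → Bool) : Type u :=
  ∀ j : κ, SignObj B (α j)

/-- The object of `B^α` whose `j`-th entry is `A (σ j)`. -/
abbrev tup {B : Type u} [Category.{v} B] {κ ι : Type} (α : κ → Bool) (σ : κ → ι)
    (A : ι → B) : PowCat B α :=
  fun j => toSign (α j) (A (σ j))

/-- A transformation `φ : F → G` of type `σ, τ`: a family of morphisms
`φ_𝐀 : F (𝐀 σ) ⟶ G (𝐀 τ)` indexed by tuples `𝐀` of objects of `B`. -/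
def Transf {B : Type u} [Category.{v} B] {C : Type u'} [Category.{v'} C] {κa κb ι : Type}
    (α : κa → Bool) (β : κb → Bool) (F : PowCat B α ⥤ C) (G : PowCat B β ⥤ C)
    (σ : κa → ι) (τ : κb → ι) : Type _ :=
  ∀ A : ι → B, F.obj (tup α σ A) ⟶ G.obj (tup β τ A)

/-- The tuple `A` with its `i`-th entry replaced by `X`. -/
abbrev upd {ι : Type} [DecidableEq ι] {B : Type u} (A : ι → B) (i : ι) (X : B) : ι → B :=
  fun k => if k = i then X else A k

/-- The mixed-variance tuple `𝐀[X,Y/i]σ`: entries over the `i`-th variable are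
`e false` in contravariant positions, `e true` in covariant ones. -/
abbrev tupMV {B : Type u} [Category.{v} B] {κ ι : Type} [DecidableEq ι] (α : κ → Bool)
    (σ : κ → ι) (A : ι → B) (i : ι) (e : Bool → B) : PowCat B α :=
  fun j => toSign (α j) (if σ j = i then e (α j) else A (σ j))

def mvHom {B : Type u} [Category.{v} B] {e₁ e₂ : Bool → B}
    (g : e₂ false ⟶ e₁ false) (h : e₁ true ⟶ e₂ true) :
    ∀ s : Bool, SignHom s (e₁ s) (e₂ s)
  | true => h
  | false => g

/-- The canonical morphism `tupMV α σ A i e₁ ⟶ tupMV α σ A i e₂` acting by `h` on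
covariant entries over `i`, (the opposite of) `g` on contravariant entries over `i`, and
the identity elsewhere. -/
def tupMVHom {B : Type u} [Category.{v} B] {κ ι : Type} [DecidableEq ι] (α : κ → Bool)
    (σ : κ → ι) (A : ι → B) (i : ι) (e₁ e₂ : Bool → B)
    (g : e₂ false ⟶ e₁ false) (h : e₁ true ⟶ e₂ true) :
    tupMV α σ A i e₁ ⟶ tupMV α σ A i e₂ :=
  fun j => toSignHom
    (show SignHom (α j) (if σ j = i then e₁ (α j) else A (σ j))
        (if σ j = i then e₂ (α j) else A (σ j)) from
      if hj : σ j = i then by simp only [if_pos hj]; exact mvHom g h (α j)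
      else by simp only [if_neg hj]; exact signId (α j) (A (σ j)))

/-- Dinaturality of a transformation in its `i`-th variable. -/
def DinatAt {B : Type u} [Category.{v} B] {C : Type u'} [Category.{v'} C] {κa κb ι : Type}
    [DecidableEq ι] {α : κa → Bool} {β : κb → Bool} {F : PowCat B α ⥤ C} {G : PowCat B β ⥤ C}
    {σ : κa → ι} {τ : κb → ι} (φ : Transf α β F G σ τ) (i : ι) : Prop :=
  ∀ (A : ι → B) {X Y : B} (f : X ⟶ Y),
    F.map (tupMVHom α σ A i (fun s => bif s then X else Y) (fun _ => X) f (𝟙 X)) ≫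
        φ (upd A i X) ≫
        G.map (tupMVHom β τ A i (fun _ => X) (fun s => bif s then Y else X) (𝟙 X) f) =
      F.map (tupMVHom α σ A i (fun s => bif s then X else Y) (fun _ => Y) (𝟙 Y) f) ≫
        φ (upd A i Y) ≫
        G.map (tupMVHom β τ A i (fun _ => Y) (fun s => bif s then Y else X) f (𝟙 Y))

/-- Vertical composition of transformations along a cocone `ζ, ξ` on their types. -/
def vcomp {B : Type u} [Category.{v} B] {C : Type u'} [Category.{v'} C]
    {κa κb κc ι₁ ι₂ ι : Type} {α : κa → Bool} {β : κb → Bool} {γ : κc → Bool}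
    {F : PowCat B α ⥤ C} {G : PowCat B β ⥤ C} {H : PowCat B γ ⥤ C}
    {σ : κa → ι₁} {τ : κb → ι₁} {η : κb → ι₂} {θ : κc → ι₂}
    (φ : Transf α β F G σ τ) (ψ : Transf β γ G H η θ)
    (ζ : ι₁ → ι) (ξ : ι₂ → ι) (hcomm : ∀ p, ζ (τ p) = ξ (η p)) :
    Transf α γ F H (fun p => ζ (σ p)) (fun p => ξ (θ p)) :=
  fun A =>
    φ (fun x => A (ζ x)) ≫
      eqToHom (congrArg G.obj (by
        funext j
        show toSign (β j) (A (ζ (τ j))) = toSign (β j) (A (ξ (η j)))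
        rw [hcomm j])) ≫
      ψ (fun x => A (ξ x))

section CompositeGraph

/-- Vertices of the composite graph `Γ(ψ) ∘ Γ(φ)`: the places are the arguments of the
three functors involved (with the middle ones identified), the transitions are the
variables of the two transformations. -/
abbrev CGV (wa wb wc n m : ℕ) : Type :=
  (Fin wa ⊕ Fin wb ⊕ Fin wc) ⊕ (Fin n ⊕ Fin m)

variable {wa wb wc n m l : ℕ}

/-- The arcs of the composite graph `Γ(ψ) ∘ Γ(φ)` of two consecutive transformations of
types `σ₁, τ₁` and `σ₂, τ₂` between functors of variances `α, β` and `β, γ`. -/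
def compArc (α : Fin wa → Bool) (β : Fin wb → Bool) (γ : Fin wc → Bool)
    (σ₁ : Fin wa → Fin n) (τ₁ : Fin wb → Fin n)
    (σ₂ : Fin wb → Fin m) (τ₂ : Fin wc → Fin m) :
    CGV wa wb wc n m → CGV wa wb wc n m → Prop
  | .inl (.inl p), .inr (.inl t) => σ₁ p = t ∧ α p = true
  | .inr (.inl t), .inl (.inl p) => σ₁ p = t ∧ α p = false
  | .inl (.inr (.inl p)), .inr (.inl t) => τ₁ p = t ∧ β p = false
  | .inr (.inl t), .inl (.inr (.inl p)) => τ₁ p = t ∧ β p = true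
  | .inl (.inr (.inl p)), .inr (.inr t) => σ₂ p = t ∧ β p = true
  | .inr (.inr t), .inl (.inr (.inl p)) => σ₂ p = t ∧ β p = false
  | .inl (.inr (.inr p)), .inr (.inr t) => τ₂ p = t ∧ γ p = false
  | .inr (.inr t), .inl (.inr (.inr p)) => τ₂ p = t ∧ γ p = true
  | _, _ => False

/-- The connected component (labelled by the pushout vertex `Fin l`) to which each
vertex of the composite graph belongs. -/
def compOfV (σ₁ : Fin wa → Fin n) (τ₁ : Fin wb → Fin n)
    (σ₂ : Fin wb → Fin m) (τ₂ : Fin wc → Fin m)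
    (ζ : Fin n → Fin l) (ξ : Fin m → Fin l) :
    CGV wa wb wc n m → Fin l
  | .inl (.inl p) => ζ (σ₁ p)
  | .inl (.inr (.inl p)) => ζ (τ₁ p)
  | .inl (.inr (.inr p)) => ξ (τ₂ p)
  | .inr (.inl t) => ζ t
  | .inr (.inr t) => ξ t

end CompositeGraph

section Aux

variable {B : Type u} [Category.{v} B]

/-- The object `X` or `Y` according to a Boolean. -/
@[reducible] def dval (X Y : B) : Bool → B := fun b => bif b then Y else X

/-- The morphism `𝟙 X`, `f` or `𝟙 Y` between `dval`s. -/
def dHom {X Y : B} (f : X ⟶ Y) : ∀ b₁ b₂ : Bool, b₁ ≤ b₂ → (dval X Y b₁ ⟶ dval X Y b₂)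
  | false, false, _ => 𝟙 X
  | false, true, _ => f
  | true, true, _ => 𝟙 Y
  | true, false, h => absurd h (by decide)

theorem dHom_comp {X Y : B} (f : X ⟶ Y) (b₁ b₂ b₃ : Bool) (h₁ : b₁ ≤ b₂) (h₂ : b₂ ≤ b₃)
    (h₃ : b₁ ≤ b₃) : dHom f b₁ b₂ h₁ ≫ dHom f b₂ b₃ h₂ = dHom f b₁ b₃ h₃ := by
  cases b₁ <;> cases b₂ <;> cases b₃ <;>
    first
      | exact absurd ‹true ≤ false› (by decide)
      | (show 𝟙 _ ≫ 𝟙 _ = 𝟙 _; simp)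
      | (show 𝟙 _ ≫ f = f; simp)
      | (show f ≫ 𝟙 _ = f; simp)

theorem dHom_refl {X Y : B} (f : X ⟶ Y) (b : Bool) (h : b ≤ b) :
    dHom f b b h = 𝟙 (dval X Y b) := by cases b <;> rfl

/-- compatibility of booleans relative to a sign. -/
def scompat : Bool → Bool → Bool → Prop
  | true, b₁, b₂ => b₁ ≤ b₂
  | false, b₁, b₂ => b₂ ≤ b₁

/-- signed version of `dHom`. -/
def sHom {X Y : B} (f : X ⟶ Y) : ∀ (s b₁ b₂ : Bool), scompat s b₁ b₂ →
    SignHom s (dval X Y b₁) (dval X Y b₂)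
  | true, _, _, h => dHom f _ _ h
  | false, _, _, h => dHom f _ _ h

/-- the canonical tuple with entries `X` or `Y`. -/
@[reducible] def ctup (X Y : B) {κ : Type} (α : κ → Bool) (b : κ → Bool) : PowCat B α :=
  fun j => toSign (α j) (dval X Y (b j))

/-- the canonical morphism between canonical tuples. -/
def cHom {X Y : B} (f : X ⟶ Y) {κ : Type} (α : κ → Bool) (b₁ b₂ : κ → Bool)
    (h : ∀ j, scompat (α j) (b₁ j) (b₂ j)) : ctup X Y α b₁ ⟶ ctup X Y α b₂ :=
  fun j => toSignHom (sHom f (α j) (b₁ j) (b₂ j) (h j))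

theorem sHom_comp {X Y : B} (f : X ⟶ Y) (s b₁ b₂ b₃ : Bool)
    (p₁ : scompat s b₁ b₂) (p₂ : scompat s b₂ b₃) (p₃ : scompat s b₁ b₃) :
    toSignHom (sHom f s b₁ b₂ p₁) ≫ toSignHom (sHom f s b₂ b₃ p₂) =
      toSignHom (sHom f s b₁ b₃ p₃) := by
  cases s
  · show (dHom f b₂ b₁ p₁).op ≫ (dHom f b₃ b₂ p₂).op = (dHom f b₃ b₁ p₃).op
    exact op_comp.symm.trans (congrArg Quiver.Hom.op (dHom_comp f b₃ b₂ b₁ p₂ p₁ p₃))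
  · show dHom f b₁ b₂ p₁ ≫ dHom f b₂ b₃ p₂ = dHom f b₁ b₃ p₃
    exact dHom_comp f b₁ b₂ b₃ p₁ p₂ p₃

theorem sHom_refl {X Y : B} (f : X ⟶ Y) (s b : Bool) (p : scompat s b b) :
    toSignHom (sHom f s b b p) = 𝟙 (toSign s (dval X Y b)) := by
  cases s
  · show (dHom f b b p).op = _
    refine (congrArg Quiver.Hom.op (dHom_refl f b p)).trans ?_
    rfl
  · show dHom f b b p = _
    refine (dHom_refl f b p).trans ?_
    rfl

theorem cHom_comp {X Y : B} (f : X ⟶ Y) {κ : Type} (α : κ → Bool) (b₁ b₂ b₃ : κ → Bool)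
    (h₁ : ∀ j, scompat (α j) (b₁ j) (b₂ j)) (h₂ : ∀ j, scompat (α j) (b₂ j) (b₃ j))
    (h₃ : ∀ j, scompat (α j) (b₁ j) (b₃ j)) :
    cHom f α b₁ b₂ h₁ ≫ cHom f α b₂ b₃ h₂ = cHom f α b₁ b₃ h₃ := by
  funext j
  exact sHom_comp f (α j) _ _ _ _ _ _

theorem cHom_refl {X Y : B} (f : X ⟶ Y) {κ : Type} (α : κ → Bool) (b : κ → Bool)
    (h : ∀ j, scompat (α j) (b j) (b j)) : cHom f α b b h = 𝟙 (ctup X Y α b) := by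
  funext j
  exact sHom_refl f (α j) _ _

end Aux
section Aux2

variable {B : Type u} [Category.{v} B] {C : Type u'} [Category.{v'} C]

theorem toSignHom_heq {s : Bool} {X₁ Y₁ X₂ Y₂ : B} (hX : X₁ = X₂) (hY : Y₁ = Y₂)
    {u : SignHom s X₁ Y₁} {v : SignHom s X₂ Y₂} (h : HEq u v) :
    HEq (toSignHom u) (toSignHom v) := by
  subst hX; subst hY; rw [eq_of_heq h]

theorem pi_map_heq {κ : Type} {α : κ → Bool} (F : PowCat B α ⥤ C)
    {T₁ T₂ T₁' T₂' : PowCat B α} (h₁ : T₁ = T₁') (h₂ : T₂ = T₂')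
    (u : T₁ ⟶ T₂) (u' : T₁' ⟶ T₂') (hu : ∀ j, HEq (u j) (u' j)) :
    F.map u = eqToHom (congrArg F.obj h₁) ≫ F.map u' ≫ eqToHom (congrArg F.obj h₂).symm := by
  subst h₁; subst h₂
  have : u = u' := funext fun j => eq_of_heq (hu j)
  subst this
  simp

theorem transf_congr {κa κb ι : Type} {α : κa → Bool} {β : κb → Bool}
    {F : PowCat B α ⥤ C} {G : PowCat B β ⥤ C} {σ : κa → ι} {τ : κb → ι}
    (φ : Transf α β F G σ τ) {A₁ A₂ : ι → B} (h : A₁ = A₂) :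
    φ A₁ = eqToHom (congrArg F.obj (congrArg (tup α σ) h)) ≫ φ A₂ ≫
      eqToHom (congrArg G.obj (congrArg (tup β τ) h)).symm := by
  subst h; simp

theorem sHom_congr {X Y : B} (f : X ⟶ Y) (s : Bool) {b₁ b₂ b₁' b₂' : Bool}
    (h₁ : b₁ = b₁') (h₂ : b₂ = b₂') (p : scompat s b₁ b₂) (p' : scompat s b₁' b₂') :
    HEq (sHom f s b₁ b₂ p) (sHom f s b₁' b₂' p') := by
  subst h₁; subst h₂; rfl

theorem mvHom_heq_sHom {X Y : B} (f : X ⟶ Y) {e₁ e₂ : Bool → B} (u₁ u₂ : Bool → Bool)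
    (he₁ : ∀ s, e₁ s = dval X Y (u₁ s)) (he₂ : ∀ s, e₂ s = dval X Y (u₂ s))
    (g : e₂ false ⟶ e₁ false) (h : e₁ true ⟶ e₂ true)
    (hlef : u₂ false ≤ u₁ false) (hlet : u₁ true ≤ u₂ true)
    (hg : HEq g (dHom f (u₂ false) (u₁ false) hlef))
    (hh : HEq h (dHom f (u₁ true) (u₂ true) hlet))
    (s : Bool) (p : scompat s (u₁ s) (u₂ s)) :
    HEq (mvHom g h s) (sHom f s (u₁ s) (u₂ s) p) := by
  cases s
  · exact hg.trans (heq_of_eq rfl)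
  · exact hh.trans (heq_of_eq rfl)

theorem signId_heq_sHom {X Y : B} (f : X ⟶ Y) (s : Bool) {Z : B} (b : Bool)
    (hZ : Z = dval X Y b) (p : scompat s b b) :
    HEq (signId s Z) (sHom f s b b p) := by
  subst hZ
  cases s
  · show HEq (𝟙 (dval X Y b)) (dHom f b b p)
    exact heq_of_eq (dHom_refl f b p).symm
  · show HEq (𝟙 (dval X Y b)) (dHom f b b p)
    exact heq_of_eq (dHom_refl f b p).symm

/-- Master conversion: `F.map` of a `tupMVHom` equals the `eqToHom`-conjugate of
`F.map` of a canonical `cHom`. -/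
theorem map_tupMVHom {κ ι : Type} [DecidableEq ι] {α : κ → Bool} (F : PowCat B α ⥤ C)
    (σ : κ → ι) (A : ι → B) (i : ι) {X Y : B} (f : X ⟶ Y)
    (e₁ e₂ : Bool → B) (g : e₂ false ⟶ e₁ false) (h : e₁ true ⟶ e₂ true)
    (u₁ u₂ : Bool → Bool) (base : ι → Bool) (B₁ B₂ : κ → Bool)
    (hc : ∀ j, scompat (α j) (B₁ j) (B₂ j))
    (he₁ : ∀ s, e₁ s = dval X Y (u₁ s)) (he₂ : ∀ s, e₂ s = dval X Y (u₂ s))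
    (hA : ∀ j, σ j ≠ i → A (σ j) = dval X Y (base (σ j)))
    (hB₁ : ∀ j, B₁ j = if σ j = i then u₁ (α j) else base (σ j))
    (hB₂ : ∀ j, B₂ j = if σ j = i then u₂ (α j) else base (σ j))
    (hlef : u₂ false ≤ u₁ false) (hlet : u₁ true ≤ u₂ true)
    (hg : HEq g (dHom f (u₂ false) (u₁ false) hlef))
    (hh : HEq h (dHom f (u₁ true) (u₂ true) hlet))
    (hT₁ : tupMV α σ A i e₁ = ctup X Y α B₁) (hT₂ : tupMV α σ A i e₂ = ctup X Y α B₂) :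
    F.map (tupMVHom α σ A i e₁ e₂ g h) =
      eqToHom (congrArg F.obj hT₁) ≫ F.map (cHom f α B₁ B₂ hc) ≫
        eqToHom (congrArg F.obj hT₂).symm := by
  refine pi_map_heq F hT₁ hT₂ _ _ (fun j => ?_)
  show HEq (tupMVHom α σ A i e₁ e₂ g h j) (toSignHom (sHom f (α j) (B₁ j) (B₂ j) (hc j)))
  unfold tupMVHom
  by_cases hj : σ j = i
  · rw [dif_pos hj]
    refine toSignHom_heq (by rw [if_pos hj, he₁, hB₁ j, if_pos hj]) (by rw [if_pos hj, he₂, hB₂ j, if_pos hj]) ?_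
    simp only [eq_mpr_eq_cast]
    refine (cast_heq _ _).trans ?_
    refine (mvHom_heq_sHom f u₁ u₂ he₁ he₂ g h hlef hlet hg hh (α j) ?_).trans
      (sHom_congr f (α j) (by rw [hB₁ j, if_pos hj]) (by rw [hB₂ j, if_pos hj]) _ _)
    · have := hc j
      rwa [hB₁ j, if_pos hj, hB₂ j, if_pos hj] at this
  · rw [dif_neg hj]
    refine toSignHom_heq (by rw [if_neg hj, hA j hj, hB₁ j, if_neg hj]) (by rw [if_neg hj, hA j hj, hB₂ j, if_neg hj]) ?_
    simp only [eq_mpr_eq_cast]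
    refine (cast_heq _ _).trans ?_
    refine (signId_heq_sHom f (α j) (base (σ j)) (hA j hj) ?_).trans
      (sHom_congr f (α j) (by rw [hB₁ j, if_neg hj]) (by rw [hB₂ j, if_neg hj]) _ _)
    · cases hs : α j <;> exact le_refl _

/-- pointwise equality of `tupMV` with a canonical tuple. -/
theorem tupMV_eq_ctup {κ ι : Type} [DecidableEq ι] {α : κ → Bool}
    (σ : κ → ι) (A : ι → B) (i : ι) {X Y : B}
    (e : Bool → B) (u : Bool → Bool) (base : ι → Bool) (Bb : κ → Bool)
    (he : ∀ s, e s = dval X Y (u s))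
    (hA : ∀ j, σ j ≠ i → A (σ j) = dval X Y (base (σ j)))
    (hB : ∀ j, Bb j = if σ j = i then u (α j) else base (σ j)) :
    tupMV α σ A i e = ctup X Y α Bb := by
  funext j
  show toSign (α j) _ = toSign (α j) (dval X Y (Bb j))
  rw [hB j]
  by_cases hj : σ j = i
  · rw [if_pos hj, if_pos hj, he]
  · rw [if_neg hj, if_neg hj, hA j hj]

end Aux2
section Aux3

variable {B : Type u} [Category.{v} B] {C : Type u'} [Category.{v'} C]
variable {wa wb wc n m : ℕ}
variable {α : Fin wa → Bool} {β : Fin wb → Bool} {γ : Fin wc → Bool}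
variable {F₁ : PowCat B α ⥤ C} {F₂ : PowCat B β ⥤ C} {F₃ : PowCat B γ ⥤ C}
variable {σ₁ : Fin wa → Fin n} {τ₁ : Fin wb → Fin n} {σ₂ : Fin wb → Fin m} {τ₂ : Fin wc → Fin m}

/-- Admissibility of a pair of Boolean markings of the transitions. -/
def Adm (β : Fin wb → Bool) (τ₁ : Fin wb → Fin n) (σ₂ : Fin wb → Fin m)
    (c : Fin n → Bool) (d : Fin m → Bool) : Prop :=
  ∀ j, scompat (β j) (c (τ₁ j)) (d (σ₂ j))

theorem adm_first {X Y : B} (f : X ⟶ Y) (c : Fin n → Bool) (j : Fin wa) :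
    scompat (α j) (!(α j)) (c (σ₁ j)) := by
  cases hs : α j
  · exact Bool.le_true _
  · exact Bool.false_le _

theorem adm_last {X Y : B} (f : X ⟶ Y) (d : Fin m → Bool) (j : Fin wc) :
    scompat (γ j) (d (τ₂ j)) (γ j) := by
  cases hs : γ j
  · exact Bool.false_le _
  · exact Bool.le_true _

/-- The intermediate morphism attached to an admissible marking `(c, d)`. -/
def Mor (φ : Transf α β F₁ F₂ σ₁ τ₁) (ψ : Transf β γ F₂ F₃ σ₂ τ₂)
    {X Y : B} (f : X ⟶ Y) (c : Fin n → Bool) (d : Fin m → Bool)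
    (hcd : Adm β τ₁ σ₂ c d) :
    F₁.obj (ctup X Y α fun j => !(α j)) ⟶ F₃.obj (ctup X Y γ γ) :=
  F₁.map (cHom f α (fun j => !(α j)) (fun j => c (σ₁ j)) (fun j => adm_first f c j)) ≫
    φ (fun x => dval X Y (c x)) ≫
    F₂.map (cHom f β (fun j => c (τ₁ j)) (fun j => d (σ₂ j)) hcd) ≫
    ψ (fun x => dval X Y (d x)) ≫
    F₃.map (cHom f γ (fun j => d (τ₂ j)) (fun j => γ j) (fun j => adm_last f d j))

end Aux3
section Aux4

variable {B : Type u} [Category.{v} B] {C : Type u'} [Category.{v'} C]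
variable {wa wb wc n m : ℕ}
variable {α : Fin wa → Bool} {β : Fin wb → Bool} {γ : Fin wc → Bool}
variable {F₁ : PowCat B α ⥤ C} {F₂ : PowCat B β ⥤ C} {F₃ : PowCat B γ ⥤ C}
variable {σ₁ : Fin wa → Fin n} {τ₁ : Fin wb → Fin n} {σ₂ : Fin wb → Fin m} {τ₂ : Fin wc → Fin m}

theorem stepPhi (φ : Transf α β F₁ F₂ σ₁ τ₁) (ψ : Transf β γ F₂ F₃ σ₂ τ₂)
    (hφd : ∀ x, DinatAt φ x) {X Y : B} (f : X ⟶ Y)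
    (c : Fin n → Bool) (d : Fin m → Bool) (hcd : Adm β τ₁ σ₂ c d)
    (t : Fin n) (hct : c t = false)
    (hsucc : ∀ j, τ₁ j = t → β j = true → d (σ₂ j) = true)
    (hcd' : Adm β τ₁ σ₂ (fun k => if k = t then true else c k) d) :
    Mor φ ψ f c d hcd = Mor φ ψ f (fun k => if k = t then true else c k) d hcd' := by
  set c' : Fin n → Bool := fun k => if k = t then true else c k with hc'
  set A : Fin n → B := fun x => dval X Y (c x) with hA
  set A' : Fin n → B := fun x => dval X Y (c' x) with hA'
  set B₁ : Fin wa → Bool := fun j => if σ₁ j = t then !(α j) else c (σ₁ j) with hB₁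
  set Q₂ : Fin wb → Bool := fun j => if τ₁ j = t then β j else c (τ₁ j) with hQ₂
  -- compatibility facts
  have p1 : ∀ j, scompat (α j) (!(α j)) (B₁ j) := by
    intro j
    simp only [hB₁]
    split
    · cases α j <;> exact le_refl _
    · cases α j
      · exact Bool.le_true _
      · exact Bool.false_le _
  have p2 : ∀ j, scompat (α j) (B₁ j) (c (σ₁ j)) := by
    intro j
    simp only [hB₁]
    split <;> cases α j
    · exact Bool.le_true _
    · exact Bool.false_le _
    · exact le_refl _
    · exact le_refl _
  have p3 : ∀ j, scompat (α j) (B₁ j) (c' (σ₁ j)) := by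
    intro j
    simp only [hB₁, hc']
    split <;> cases α j
    · exact Bool.le_true _
    · exact Bool.false_le _
    · exact le_refl _
    · exact le_refl _
  have q1 : ∀ j, scompat (β j) (c (τ₁ j)) (Q₂ j) := by
    intro j
    simp only [hQ₂]
    split
    · cases β j
      · exact Bool.false_le _
      · exact Bool.le_true _
    · cases β j <;> exact le_refl _
  have q2 : ∀ j, scompat (β j) (c' (τ₁ j)) (Q₂ j) := by
    intro j
    simp only [hQ₂, hc']
    split
    · cases β j
      · exact Bool.false_le _
      · exact le_refl _
    · cases β j <;> exact le_refl _
  have q3 : ∀ j, scompat (β j) (Q₂ j) (d (σ₂ j)) := by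
    intro j
    have := hcd j
    simp only [hQ₂]
    split
    · rename_i hj
      cases hβ : β j
      · rw [hβ] at this
        show d (σ₂ j) ≤ false
        calc d (σ₂ j) ≤ c (τ₁ j) := this
          _ = false := by rw [hj, hct]
      · rw [hsucc j hj hβ]
        exact le_refl _
    · exact this
  -- tuple equalities
  have hupdX : upd A t X = A := by
    funext k
    show (if k = t then X else A k) = A k
    by_cases hk : k = t
    · rw [if_pos hk, hA]
      show X = dval X Y (c k)
      rw [hk, hct]
      exact rfl
    · rw [if_neg hk]
  have hupdY : upd A t Y = A' := by
    funext k
    show (if k = t then Y else A k) = A' k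
    by_cases hk : k = t
    · rw [if_pos hk, hA']
      show Y = dval X Y (c' k)
      rw [hc']
      show Y = dval X Y (if k = t then true else c k)
      rw [if_pos hk]
      exact rfl
    · rw [if_neg hk, hA, hA']
      show dval X Y (c k) = dval X Y (if k = t then true else c k)
      rw [if_neg hk]
  have he₁ : ∀ s, (fun s => bif s then X else Y) s = dval X Y ((fun s => !s) s) := by
    intro s; cases s <;> rfl
  have heX : ∀ s, (fun _ : Bool => X) s = dval X Y ((fun _ => false) s) := fun s => rfl
  have heY : ∀ s, (fun _ : Bool => Y) s = dval X Y ((fun _ => true) s) := fun s => rfl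
  have he₂ : ∀ s, (fun s => bif s then Y else X) s = dval X Y ((fun s : Bool => s) s) :=
    fun s => rfl
  have hBif₁ : ∀ j, B₁ j = if σ₁ j = t then (fun s => !s) (α j) else c (σ₁ j) := fun j => rfl
  have hBc : ∀ j, c (σ₁ j) = if σ₁ j = t then (fun _ : Bool => false) (α j) else c (σ₁ j) := by
    intro j; split
    · rename_i hj; rw [hj, hct]
    · rfl
  have hBc' : ∀ j, c' (σ₁ j) = if σ₁ j = t then (fun _ : Bool => true) (α j) else c (σ₁ j) :=
    fun j => rfl
  have hBcτ : ∀ j, c (τ₁ j) = if τ₁ j = t then (fun _ : Bool => false) (β j) else c (τ₁ j) := by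
    intro j; split
    · rename_i hj; rw [hj, hct]
    · rfl
  have hBc'τ : ∀ j, c' (τ₁ j) = if τ₁ j = t then (fun _ : Bool => true) (β j) else c (τ₁ j) :=
    fun j => rfl
  have hBQ₂ : ∀ j, Q₂ j = if τ₁ j = t then (fun s : Bool => s) (β j) else c (τ₁ j) := fun j => rfl
  have hAz : ∀ (ι' : Type) (σ : ι' → Fin n) (j : ι'), σ j ≠ t → A (σ j) = dval X Y (c (σ j)) :=
    fun _ _ j _ => by rw [hA]
  -- tuple equalities, named
  have hTe1 : tupMV α σ₁ A t (fun s => bif s then X else Y) = ctup X Y α B₁ :=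
    tupMV_eq_ctup σ₁ A t _ _ c B₁ he₁ (hAz _ σ₁) hBif₁
  have hTX1 : tupMV α σ₁ A t (fun _ => X) = ctup X Y α (fun j => c (σ₁ j)) :=
    tupMV_eq_ctup σ₁ A t _ _ c _ heX (hAz _ σ₁) hBc
  have hTY1 : tupMV α σ₁ A t (fun _ => Y) = ctup X Y α (fun j => c' (σ₁ j)) :=
    tupMV_eq_ctup σ₁ A t _ _ c _ heY (hAz _ σ₁) hBc'
  have hTX2 : tupMV β τ₁ A t (fun _ => X) = ctup X Y β (fun j => c (τ₁ j)) :=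
    tupMV_eq_ctup τ₁ A t _ _ c _ heX (hAz _ τ₁) hBcτ
  have hTY2 : tupMV β τ₁ A t (fun _ => Y) = ctup X Y β (fun j => c' (τ₁ j)) :=
    tupMV_eq_ctup τ₁ A t _ _ c _ heY (hAz _ τ₁) hBc'τ
  have hTe2 : tupMV β τ₁ A t (fun s => bif s then Y else X) = ctup X Y β Q₂ :=
    tupMV_eq_ctup τ₁ A t _ _ c Q₂ he₂ (hAz _ τ₁) hBQ₂
  -- the six conversions
  have h1 := map_tupMVHom F₁ σ₁ A t f (fun s => bif s then X else Y) (fun _ => X) f (𝟙 X)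
    (fun s => !s) (fun _ => false) c B₁ (fun j => c (σ₁ j)) p2 he₁ heX (hAz _ σ₁) hBif₁ hBc
    (by decide) (le_refl _) HEq.rfl HEq.rfl hTe1 hTX1
  have h2 := map_tupMVHom F₂ τ₁ A t f (fun _ => X) (fun s => bif s then Y else X) (𝟙 X) f
    (fun _ => false) (fun s => s) c (fun j => c (τ₁ j)) Q₂ q1 heX he₂ (hAz _ τ₁) hBcτ hBQ₂
    (le_refl _) (by decide) HEq.rfl HEq.rfl hTX2 hTe2
  have h3 := map_tupMVHom F₁ σ₁ A t f (fun s => bif s then X else Y) (fun _ => Y) (𝟙 Y) f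
    (fun s => !s) (fun _ => true) c B₁ (fun j => c' (σ₁ j)) p3 he₁ heY (hAz _ σ₁) hBif₁ hBc'
    (le_refl _) (by decide) HEq.rfl HEq.rfl hTe1 hTY1
  have h4 := map_tupMVHom F₂ τ₁ A t f (fun _ => Y) (fun s => bif s then Y else X) f (𝟙 Y)
    (fun _ => true) (fun s => s) c (fun j => c' (τ₁ j)) Q₂ q2 heY he₂ (hAz _ τ₁) hBc'τ hBQ₂
    (by decide) (le_refl _) HEq.rfl HEq.rfl hTY2 hTe2
  have h5 := transf_congr φ hupdX
  have h6 := transf_congr φ hupdY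
  have hdin := hφd t A f
  rw [h1, h2, h3, h4, h5, h6] at hdin
  simp only [Category.assoc, eqToHom_trans_assoc, eqToHom_refl, Category.id_comp,
    Category.comp_id, eqToHom_trans] at hdin
  have hdin2 := congrArg
    (fun z => eqToHom (congrArg F₁.obj hTe1).symm ≫ z ≫ eqToHom (congrArg F₂.obj hTe2)) hdin
  simp only [Category.assoc, eqToHom_trans_assoc, eqToHom_refl, Category.id_comp,
    Category.comp_id, eqToHom_trans] at hdin2
  unfold Mor
  rw [← cHom_comp f α (fun j => !(α j)) B₁ (fun j => c (σ₁ j)) p1 p2,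
      ← cHom_comp f α (fun j => !(α j)) B₁ (fun j => c' (σ₁ j)) p1 p3]
  erw [← cHom_comp f β (fun j => c (τ₁ j)) Q₂ (fun j => d (σ₂ j)) q1 q3,
      ← cHom_comp f β (fun j => c' (τ₁ j)) Q₂ (fun j => d (σ₂ j)) q2 q3]
  simp only [Functor.map_comp, Category.assoc]
  rw [reassoc_of% hdin2]

end Aux4
section Aux5

variable {B : Type u} [Category.{v} B] {C : Type u'} [Category.{v'} C]
variable {wa wb wc n m : ℕ}
variable {α : Fin wa → Bool} {β : Fin wb → Bool} {γ : Fin wc → Bool}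
variable {F₁ : PowCat B α ⥤ C} {F₂ : PowCat B β ⥤ C} {F₃ : PowCat B γ ⥤ C}
variable {σ₁ : Fin wa → Fin n} {τ₁ : Fin wb → Fin n} {σ₂ : Fin wb → Fin m} {τ₂ : Fin wc → Fin m}

theorem stepPsi (φ : Transf α β F₁ F₂ σ₁ τ₁) (ψ : Transf β γ F₂ F₃ σ₂ τ₂)
    (hψd : ∀ x, DinatAt ψ x) {X Y : B} (f : X ⟶ Y)
    (c : Fin n → Bool) (d : Fin m → Bool) (hcd : Adm β τ₁ σ₂ c d)
    (t : Fin m) (hdt : d t = false)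
    (hpred : ∀ j, σ₂ j = t → β j = false → c (τ₁ j) = true)
    (hcd' : Adm β τ₁ σ₂ c (fun k => if k = t then true else d k)) :
    Mor φ ψ f c d hcd = Mor φ ψ f c (fun k => if k = t then true else d k) hcd' := by
  set d' : Fin m → Bool := fun k => if k = t then true else d k with hd'
  set A : Fin m → B := fun x => dval X Y (d x) with hA
  set A' : Fin m → B := fun x => dval X Y (d' x) with hA'
  set P : Fin wb → Bool := fun j => if σ₂ j = t then !(β j) else d (σ₂ j) with hP
  set R : Fin wc → Bool := fun j => if τ₂ j = t then γ j else d (τ₂ j) with hR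
  -- compatibility facts
  have pm1 : ∀ j, scompat (β j) (c (τ₁ j)) (P j) := by
    intro j
    have hj0 := hcd j
    simp only [hP]
    split
    · rename_i hj
      cases hβ : β j
      · rw [hβ] at hj0
        rw [hpred j hj hβ]
        exact Bool.le_true _
      · rw [hβ] at hj0
        show c (τ₁ j) ≤ (!true)
        calc c (τ₁ j) ≤ d (σ₂ j) := hj0
          _ = false := by rw [hj, hdt]
    · exact hj0
  have p2 : ∀ j, scompat (β j) (P j) (d (σ₂ j)) := by
    intro j
    simp only [hP]
    split <;> cases β j
    · exact Bool.le_true _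
    · exact Bool.false_le _
    · exact le_refl _
    · exact le_refl _
  have p3 : ∀ j, scompat (β j) (P j) (d' (σ₂ j)) := by
    intro j
    simp only [hP, hd']
    split <;> cases β j
    · exact Bool.le_true _
    · exact Bool.false_le _
    · exact le_refl _
    · exact le_refl _
  have q1 : ∀ j, scompat (γ j) (d (τ₂ j)) (R j) := by
    intro j
    simp only [hR]
    split
    · cases γ j
      · exact Bool.false_le _
      · exact Bool.le_true _
    · cases γ j <;> exact le_refl _
  have q2 : ∀ j, scompat (γ j) (d' (τ₂ j)) (R j) := by
    intro j
    simp only [hR, hd']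
    split
    · cases γ j
      · exact Bool.false_le _
      · exact le_refl _
    · cases γ j <;> exact le_refl _
  have q3 : ∀ j, scompat (γ j) (R j) (γ j) := by
    intro j
    simp only [hR]
    split
    · cases γ j <;> exact le_refl _
    · cases γ j
      · exact Bool.false_le _
      · exact Bool.le_true _
  -- tuple equalities
  have hupdX : upd A t X = A := by
    funext k
    show (if k = t then X else A k) = A k
    by_cases hk : k = t
    · rw [if_pos hk, hA]
      show X = dval X Y (d k)
      rw [hk, hdt]
      exact rfl
    · rw [if_neg hk]
  have hupdY : upd A t Y = A' := by
    funext k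
    show (if k = t then Y else A k) = A' k
    by_cases hk : k = t
    · rw [if_pos hk, hA']
      show Y = dval X Y (d' k)
      rw [hd']
      show Y = dval X Y (if k = t then true else d k)
      rw [if_pos hk]
      exact rfl
    · rw [if_neg hk, hA, hA']
      show dval X Y (d k) = dval X Y (if k = t then true else d k)
      rw [if_neg hk]
  have he₁ : ∀ s, (fun s => bif s then X else Y) s = dval X Y ((fun s => !s) s) := by
    intro s; cases s <;> rfl
  have heX : ∀ s, (fun _ : Bool => X) s = dval X Y ((fun _ => false) s) := fun s => rfl
  have heY : ∀ s, (fun _ : Bool => Y) s = dval X Y ((fun _ => true) s) := fun s => rfl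
  have he₂ : ∀ s, (fun s => bif s then Y else X) s = dval X Y ((fun s : Bool => s) s) :=
    fun s => rfl
  have hAz : ∀ (ι' : Type) (σ : ι' → Fin m) (j : ι'), σ j ≠ t → A (σ j) = dval X Y (d (σ j)) :=
    fun _ _ j _ => by rw [hA]
  have hBifP : ∀ j, P j = if σ₂ j = t then (fun s => !s) (β j) else d (σ₂ j) := fun j => rfl
  have hBd : ∀ j, d (σ₂ j) = if σ₂ j = t then (fun _ : Bool => false) (β j) else d (σ₂ j) := by
    intro j; split
    · rename_i hj; rw [hj, hdt]
    · rfl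
  have hBd' : ∀ j, d' (σ₂ j) = if σ₂ j = t then (fun _ : Bool => true) (β j) else d (σ₂ j) :=
    fun j => rfl
  have hBdτ : ∀ j, d (τ₂ j) = if τ₂ j = t then (fun _ : Bool => false) (γ j) else d (τ₂ j) := by
    intro j; split
    · rename_i hj; rw [hj, hdt]
    · rfl
  have hBd'τ : ∀ j, d' (τ₂ j) = if τ₂ j = t then (fun _ : Bool => true) (γ j) else d (τ₂ j) :=
    fun j => rfl
  have hBR : ∀ j, R j = if τ₂ j = t then (fun s : Bool => s) (γ j) else d (τ₂ j) := fun j => rfl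
  -- tuple equalities, named
  have hTe1 : tupMV β σ₂ A t (fun s => bif s then X else Y) = ctup X Y β P :=
    tupMV_eq_ctup σ₂ A t _ _ d P he₁ (hAz _ σ₂) hBifP
  have hTX1 : tupMV β σ₂ A t (fun _ => X) = ctup X Y β (fun j => d (σ₂ j)) :=
    tupMV_eq_ctup σ₂ A t _ _ d _ heX (hAz _ σ₂) hBd
  have hTY1 : tupMV β σ₂ A t (fun _ => Y) = ctup X Y β (fun j => d' (σ₂ j)) :=
    tupMV_eq_ctup σ₂ A t _ _ d _ heY (hAz _ σ₂) hBd'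
  have hTX2 : tupMV γ τ₂ A t (fun _ => X) = ctup X Y γ (fun j => d (τ₂ j)) :=
    tupMV_eq_ctup τ₂ A t _ _ d _ heX (hAz _ τ₂) hBdτ
  have hTY2 : tupMV γ τ₂ A t (fun _ => Y) = ctup X Y γ (fun j => d' (τ₂ j)) :=
    tupMV_eq_ctup τ₂ A t _ _ d _ heY (hAz _ τ₂) hBd'τ
  have hTe2 : tupMV γ τ₂ A t (fun s => bif s then Y else X) = ctup X Y γ R :=
    tupMV_eq_ctup τ₂ A t _ _ d R he₂ (hAz _ τ₂) hBR
  -- the six conversions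
  have h1 := map_tupMVHom F₂ σ₂ A t f (fun s => bif s then X else Y) (fun _ => X) f (𝟙 X)
    (fun s => !s) (fun _ => false) d P (fun j => d (σ₂ j)) p2 he₁ heX (hAz _ σ₂) hBifP hBd
    (by decide) (le_refl _) HEq.rfl HEq.rfl hTe1 hTX1
  have h2 := map_tupMVHom F₃ τ₂ A t f (fun _ => X) (fun s => bif s then Y else X) (𝟙 X) f
    (fun _ => false) (fun s => s) d (fun j => d (τ₂ j)) R q1 heX he₂ (hAz _ τ₂) hBdτ hBR
    (le_refl _) (by decide) HEq.rfl HEq.rfl hTX2 hTe2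
  have h3 := map_tupMVHom F₂ σ₂ A t f (fun s => bif s then X else Y) (fun _ => Y) (𝟙 Y) f
    (fun s => !s) (fun _ => true) d P (fun j => d' (σ₂ j)) p3 he₁ heY (hAz _ σ₂) hBifP hBd'
    (le_refl _) (by decide) HEq.rfl HEq.rfl hTe1 hTY1
  have h4 := map_tupMVHom F₃ τ₂ A t f (fun _ => Y) (fun s => bif s then Y else X) f (𝟙 Y)
    (fun _ => true) (fun s => s) d (fun j => d' (τ₂ j)) R q2 heY he₂ (hAz _ τ₂) hBd'τ hBR
    (by decide) (le_refl _) HEq.rfl HEq.rfl hTY2 hTe2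
  have h5 := transf_congr ψ hupdX
  have h6 := transf_congr ψ hupdY
  have hdin := hψd t A f
  rw [h1, h2, h3, h4, h5, h6] at hdin
  simp only [Category.assoc, eqToHom_trans_assoc, eqToHom_refl, Category.id_comp,
    Category.comp_id, eqToHom_trans] at hdin
  have hdin2 := congrArg
    (fun z => eqToHom (congrArg F₂.obj hTe1).symm ≫ z ≫ eqToHom (congrArg F₃.obj hTe2)) hdin
  simp only [Category.assoc, eqToHom_trans_assoc, eqToHom_refl, Category.id_comp,
    Category.comp_id, eqToHom_trans] at hdin2
  unfold Mor
  erw [← cHom_comp f β (fun j => c (τ₁ j)) P (fun j => d (σ₂ j)) pm1 p2,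
      ← cHom_comp f β (fun j => c (τ₁ j)) P (fun j => d' (σ₂ j)) pm1 p3,
      ← cHom_comp f γ (fun j => d (τ₂ j)) R (fun j => γ j) q1 q3,
      ← cHom_comp f γ (fun j => d' (τ₂ j)) R (fun j => γ j) q2 q3]
  simp only [Functor.map_comp, Category.assoc]
  rw [reassoc_of% hdin2]

end Aux5
section Aux6

variable {B : Type u} [Category.{v} B] {C : Type u'} [Category.{v'} C]
variable {wa wb wc n m : ℕ}
variable {α : Fin wa → Bool} {β : Fin wb → Bool} {γ : Fin wc → Bool}
variable {F₁ : PowCat B α ⥤ C} {F₂ : PowCat B β ⥤ C} {F₃ : PowCat B γ ⥤ C}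
variable {σ₁ : Fin wa → Fin n} {τ₁ : Fin wb → Fin n} {σ₂ : Fin wb → Fin m} {τ₂ : Fin wc → Fin m}

/-- The transition-to-transition reachability relation through middle places. -/
def Rmid (β : Fin wb → Bool) (τ₁ : Fin wb → Fin n) (σ₂ : Fin wb → Fin m) :
    (Fin n ⊕ Fin m) → (Fin n ⊕ Fin m) → Prop := fun a b =>
  ∃ j : Fin wb, (a = Sum.inl (τ₁ j) ∧ b = Sum.inr (σ₂ j) ∧ β j = true) ∨
                (a = Sum.inr (σ₂ j) ∧ b = Sum.inl (τ₁ j) ∧ β j = false)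

theorem transGen_lift {X' Y' : Type} (e : X' → Y') (R : X' → X' → Prop)
    (S : Y' → Y' → Prop) (h : ∀ a b, R a b → Relation.TransGen S (e a) (e b)) :
    ∀ a b, Relation.TransGen R a b → Relation.TransGen S (e a) (e b) := by
  intro a b hab
  induction hab with
  | single h' => exact h _ _ h'
  | tail _ h' ih => exact ih.trans (h _ _ h')

theorem rmid_arc (a b : Fin n ⊕ Fin m) (hab : Rmid β τ₁ σ₂ a b) :
    Relation.TransGen (compArc α β γ σ₁ τ₁ σ₂ τ₂)
      (Sum.elim (fun t => Sum.inr (Sum.inl t)) (fun t => Sum.inr (Sum.inr t)) a)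
      (Sum.elim (fun t => Sum.inr (Sum.inl t)) (fun t => Sum.inr (Sum.inr t)) b) := by
  obtain ⟨j, hj | hj⟩ := hab
  · obtain ⟨ha, hb, hβ⟩ := hj
    subst ha; subst hb
    exact Relation.TransGen.head (show compArc α β γ σ₁ τ₁ σ₂ τ₂ (Sum.inr (Sum.inl (τ₁ j)))
        (Sum.inl (Sum.inr (Sum.inl j))) from ⟨rfl, hβ⟩)
      (Relation.TransGen.single (show compArc α β γ σ₁ τ₁ σ₂ τ₂
        (Sum.inl (Sum.inr (Sum.inl j))) (Sum.inr (Sum.inr (σ₂ j))) from ⟨rfl, hβ⟩))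
  · obtain ⟨ha, hb, hβ⟩ := hj
    subst ha; subst hb
    exact Relation.TransGen.head (show compArc α β γ σ₁ τ₁ σ₂ τ₂ (Sum.inr (Sum.inr (σ₂ j)))
        (Sum.inl (Sum.inr (Sum.inl j))) from ⟨rfl, hβ⟩)
      (Relation.TransGen.single (show compArc α β γ σ₁ τ₁ σ₂ τ₂
        (Sum.inl (Sum.inr (Sum.inl j))) (Sum.inr (Sum.inl (τ₁ j))) from ⟨rfl, hβ⟩))

theorem exists_fireable
    (hacyclic : ∀ v : CGV wa wb wc n m, ¬ Relation.TransGen (compArc α β γ σ₁ τ₁ σ₂ τ₂) v v)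
    (s : Fin n ⊕ Fin m → Bool) (a₀ : Fin n ⊕ Fin m) (h₀ : s a₀ = false) :
    ∃ a, s a = false ∧ ∀ b, Rmid β τ₁ σ₂ a b → s b = true := by
  by_contra hcon
  push_neg at hcon
  have hcon' : ∀ a : {a : Fin n ⊕ Fin m // s a = false},
      ∃ b : {a : Fin n ⊕ Fin m // s a = false}, Rmid β τ₁ σ₂ a.1 b.1 := by
    intro a
    obtain ⟨b, hb1, hb2⟩ := hcon a.1 a.2
    exact ⟨⟨b, by simpa using hb2⟩, hb1⟩
  choose g hg using hcon'
  have key : ∀ (k : ℕ) (a : {a : Fin n ⊕ Fin m // s a = false}),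
      Relation.TransGen (Rmid β τ₁ σ₂) a.1 (g^[k + 1] a).1 := by
    intro k
    induction k with
    | zero => intro a; exact Relation.TransGen.single (by simpa using hg a)
    | succ k ih =>
      intro a
      rw [Function.iterate_succ_apply']
      exact (ih a).tail (hg _)
  obtain ⟨k, l, hkl, he⟩ := Finite.exists_ne_map_eq_of_infinite
    (fun k : ℕ => g^[k] ⟨a₀, h₀⟩)
  wlog hlt : k < l generalizing k l
  · exact this l k hkl.symm he.symm (by omega)
  have hcyc : Relation.TransGen (Rmid β τ₁ σ₂) (g^[k] ⟨a₀, h₀⟩).1 (g^[k] ⟨a₀, h₀⟩).1 := by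
    have h2 : g^[(l - k - 1) + 1] (g^[k] ⟨a₀, h₀⟩) = g^[l] ⟨a₀, h₀⟩ := by
      rw [← Function.iterate_add_apply]
      congr 1
      omega
    have := key (l - k - 1) (g^[k] ⟨a₀, h₀⟩)
    rw [h2, ← he] at this
    exact this
  exact hacyclic _ (transGen_lift _ _ _ (fun a b => rmid_arc a b) _ _ hcyc)

theorem admTop : Adm β τ₁ σ₂ (fun _ : Fin n => true) (fun _ : Fin m => true) := by
  intro j; cases β j <;> exact le_refl _

theorem card_flip {p : ℕ} (c : Fin p → Bool) (t : Fin p) (hct : c t = false) :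
    (Finset.univ.filter fun k => (if k = t then true else c k) = false).card <
      (Finset.univ.filter fun k => c k = false).card := by
  apply Finset.card_lt_card
  constructor
  · intro k hk
    simp only [Finset.mem_filter, Finset.mem_univ, true_and] at hk ⊢
    by_cases h : k = t
    · rw [if_pos h] at hk; exact absurd hk (by decide)
    · rwa [if_neg h] at hk
  · intro hsub
    have := hsub (by simp [hct] : t ∈ Finset.univ.filter fun k => c k = false)
    simp at this

/-- Every admissible marking yields the same morphism as the all-fired marking. -/
theorem toTop (φ : Transf α β F₁ F₂ σ₁ τ₁) (ψ : Transf β γ F₂ F₃ σ₂ τ₂)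
    (hφd : ∀ x, DinatAt φ x) (hψd : ∀ x, DinatAt ψ x) {X Y : B} (f : X ⟶ Y)
    (hacyclic : ∀ v : CGV wa wb wc n m, ¬ Relation.TransGen (compArc α β γ σ₁ τ₁ σ₂ τ₂) v v)
    (N : ℕ) (c : Fin n → Bool) (d : Fin m → Bool) (hcd : Adm β τ₁ σ₂ c d)
    (hN : (Finset.univ.filter fun t => c t = false).card +
      (Finset.univ.filter fun t => d t = false).card ≤ N) :
    Mor φ ψ f c d hcd = Mor φ ψ f (fun _ => true) (fun _ => true) admTop := by
  induction N generalizing c d with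
  | zero =>
    have hc : c = fun _ => true := by
      funext t
      by_contra h
      have ht : c t = false := by
        cases hh : c t
        · rfl
        · exact absurd hh h
      have : t ∈ Finset.univ.filter fun k => c k = false := by simp [ht]
      have h1 : 0 < (Finset.univ.filter fun k => c k = false).card :=
        Finset.card_pos.2 ⟨t, this⟩
      omega
    have hd : d = fun _ => true := by
      funext t
      by_contra h
      have ht : d t = false := by
        cases hh : d t
        · rfl
        · exact absurd hh h
      have : t ∈ Finset.univ.filter fun k => d k = false := by simp [ht]
      have h1 : 0 < (Finset.univ.filter fun k => d k = false).card :=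
        Finset.card_pos.2 ⟨t, this⟩
      omega
    subst hc; subst hd
    rfl
  | succ N ih =>
    by_cases hall : (∀ t, c t = true) ∧ ∀ t, d t = true
    · have hc : c = fun _ => true := funext hall.1
      have hd : d = fun _ => true := funext hall.2
      subst hc; subst hd
      rfl
    · have hex0 : ∃ a₀, Sum.elim c d a₀ = false := by
        by_contra h
        push_neg at h
        apply hall
        constructor
        · intro t
          have := h (Sum.inl t)
          simpa using this
        · intro t
          have := h (Sum.inr t)
          simpa using this
      obtain ⟨a₀, ha₀⟩ := hex0
      obtain ⟨a, ha1, ha2⟩ := exists_fireable hacyclic (Sum.elim c d) a₀ ha₀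
      cases a with
      | inl t =>
        have hct : c t = false := ha1
        have hsucc : ∀ j, τ₁ j = t → β j = true → d (σ₂ j) = true := by
          intro j hj hβ
          exact ha2 (Sum.inr (σ₂ j)) ⟨j, Or.inl ⟨by rw [hj], rfl, hβ⟩⟩
        have hcd' : Adm β τ₁ σ₂ (fun k => if k = t then true else c k) d := by
          intro j
          by_cases hj : τ₁ j = t
          · rw [hj]
            cases hβ : β j
            · show d (σ₂ j) ≤ (if t = t then true else c t)
              rw [if_pos rfl]
              exact Bool.le_true _
            · show (if t = t then true else c t) ≤ d (σ₂ j)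
              rw [if_pos rfl, hsucc j hj hβ]
          · have h0 := hcd j
            cases hβ : β j
            · show d (σ₂ j) ≤ (if τ₁ j = t then true else c (τ₁ j))
              rw [if_neg hj]
              rw [hβ] at h0
              exact h0
            · show (if τ₁ j = t then true else c (τ₁ j)) ≤ d (σ₂ j)
              rw [if_neg hj]
              rw [hβ] at h0
              exact h0
        rw [stepPhi φ ψ hφd f c d hcd t hct hsucc hcd']
        apply ih
        have := card_flip c t hct
        omega
      | inr t =>
        have hdt : d t = false := ha1
        have hpred : ∀ j, σ₂ j = t → β j = false → c (τ₁ j) = true := by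
          intro j hj hβ
          exact ha2 (Sum.inl (τ₁ j)) ⟨j, Or.inr ⟨by rw [hj], rfl, hβ⟩⟩
        have hcd' : Adm β τ₁ σ₂ c (fun k => if k = t then true else d k) := by
          intro j
          by_cases hj : σ₂ j = t
          · rw [hj]
            cases hβ : β j
            · show (if t = t then true else d t) ≤ c (τ₁ j)
              rw [if_pos rfl, hpred j hj hβ]
            · show c (τ₁ j) ≤ (if t = t then true else d t)
              rw [if_pos rfl]
              exact Bool.le_true _
          · have h0 := hcd j
            cases hβ : β j
            · show (if σ₂ j = t then true else d (σ₂ j)) ≤ c (τ₁ j)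
              rw [if_neg hj]
              rw [hβ] at h0
              exact h0
            · show c (τ₁ j) ≤ (if σ₂ j = t then true else d (σ₂ j))
              rw [if_neg hj]
              rw [hβ] at h0
              exact h0
        rw [stepPsi φ ψ hψd f c d hcd t hdt hpred hcd']
        apply ih
        have := card_flip d t hdt
        omega

end Aux6
section Aux65

variable {B : Type u} [Category.{v} B]

theorem cHom_eqToHom {X Y : B} (f : X ⟶ Y) {κ : Type} (α : κ → Bool) (b₁ b₂ : κ → Bool)
    (hb : b₁ = b₂) (h : ∀ j, scompat (α j) (b₁ j) (b₂ j)) :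
    cHom f α b₁ b₂ h = eqToHom (congrArg (ctup X Y α) hb) := by
  subst hb
  rw [cHom_refl]
  simp

end Aux65
/-- Let `φ : F₁ → F₂` and `ψ : F₂ → F₃` be transformations, dinatural in
all of their variables, such that the pushout defining the type of `ψ ∘ φ` has vertex `1`
(i.e. `ψ ∘ φ` depends on only one variable).  If the composite graph `Γ(ψ) ∘ Γ(φ)` is
acyclic, then `ψ ∘ φ` is dinatural in its unique variable. -/
theorem vcomp_dinatural_of_acyclic_one_variable
    {B : Type u} [Category.{v} B] {C : Type u'} [Category.{v'} C]
    {wa wb wc n m : ℕ} (hn : 0 < n) (hm : 0 < m)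
    {α : Fin wa → Bool} {β : Fin wb → Bool} {γ : Fin wc → Bool}
    {F₁ : PowCat B α ⥤ C} {F₂ : PowCat B β ⥤ C} {F₃ : PowCat B γ ⥤ C}
    {σ₁ : Fin wa → Fin n} {τ₁ : Fin wb → Fin n} {σ₂ : Fin wb → Fin m} {τ₂ : Fin wc → Fin m}
    (φ : Transf α β F₁ F₂ σ₁ τ₁) (ψ : Transf β γ F₂ F₃ σ₂ τ₂)
    (hφ : ∀ x, DinatAt φ x) (hψ : ∀ x, DinatAt ψ x)
    (ζ : Fin n → Fin 1) (ξ : Fin m → Fin 1)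
    (hcomm : ∀ p, ζ (τ₁ p) = ξ (σ₂ p))
    (hpush : ∀ (Z : Type) (u : Fin n → Z) (v : Fin m → Z), (∀ p, u (τ₁ p) = v (σ₂ p)) →
      ∃! w : Fin 1 → Z, (∀ x, w (ζ x) = u x) ∧ ∀ y, w (ξ y) = v y)
    (hacyclic : ∀ v : CGV wa wb wc n m,
      ¬ Relation.TransGen (compArc α β γ σ₁ τ₁ σ₂ τ₂) v v) :
    ∀ i, DinatAt (vcomp φ ψ ζ ξ hcomm) i := by
  intro i A X Y f
  have hsub : ∀ x : Fin 1, x = i := by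
    intro x
    have h1 := x.isLt
    have h2 := i.isLt
    exact Fin.ext (by omega)
  set cbot : Fin n → Bool := fun _ => false with hcbot
  set dbot : Fin m → Bool := fun _ => false with hdbot
  have admBot : Adm β τ₁ σ₂ cbot dbot := by
    intro j; cases β j <;> exact le_refl _
  -- basic value equalities
  have he₁ : ∀ s, (fun s => bif s then X else Y) s = dval X Y ((fun s => !s) s) := by
    intro s; cases s <;> rfl
  have heX : ∀ s, (fun _ : Bool => X) s = dval X Y ((fun _ => false) s) := fun s => rfl
  have heY : ∀ s, (fun _ : Bool => Y) s = dval X Y ((fun _ => true) s) := fun s => rfl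
  have he₂ : ∀ s, (fun s => bif s then Y else X) s = dval X Y ((fun s : Bool => s) s) :=
    fun s => rfl
  set bas : Fin 1 → Bool := fun _ => false with hbas
  have hA1 : ∀ j : Fin wa, (fun p => ζ (σ₁ p)) j ≠ i →
      A ((fun p => ζ (σ₁ p)) j) = dval X Y (bas ((fun p => ζ (σ₁ p)) j)) :=
    fun j hj => absurd (hsub _) hj
  have hA3 : ∀ j : Fin wc, (fun p => ξ (τ₂ p)) j ≠ i →
      A ((fun p => ξ (τ₂ p)) j) = dval X Y (bas ((fun p => ξ (τ₂ p)) j)) :=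
    fun j hj => absurd (hsub _) hj
  -- boolean tuple descriptions
  have hB₁ : ∀ j : Fin wa, (fun j => !(α j)) j =
      if (fun p => ζ (σ₁ p)) j = i then (fun s => !s) (α j) else bas ((fun p => ζ (σ₁ p)) j) := by
    intro j; rw [if_pos (hsub _)]
  have hBcbot : ∀ j : Fin wa, (fun j => cbot (σ₁ j)) j =
      if (fun p => ζ (σ₁ p)) j = i then (fun _ : Bool => false) (α j)
        else bas ((fun p => ζ (σ₁ p)) j) := by
    intro j; rw [if_pos (hsub _)]
  have hBctop : ∀ j : Fin wa, (fun j => (fun _ : Fin n => true) (σ₁ j)) j =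
      if (fun p => ζ (σ₁ p)) j = i then (fun _ : Bool => true) (α j)
        else bas ((fun p => ζ (σ₁ p)) j) := by
    intro j; rw [if_pos (hsub _)]
  have hBdbot : ∀ j : Fin wc, (fun j => dbot (τ₂ j)) j =
      if (fun p => ξ (τ₂ p)) j = i then (fun _ : Bool => false) (γ j)
        else bas ((fun p => ξ (τ₂ p)) j) := by
    intro j; rw [if_pos (hsub _)]
  have hBdtop : ∀ j : Fin wc, (fun j => (fun _ : Fin m => true) (τ₂ j)) j =
      if (fun p => ξ (τ₂ p)) j = i then (fun _ : Bool => true) (γ j)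
        else bas ((fun p => ξ (τ₂ p)) j) := by
    intro j; rw [if_pos (hsub _)]
  have hBγ : ∀ j : Fin wc, (fun j => γ j) j =
      if (fun p => ξ (τ₂ p)) j = i then (fun s : Bool => s) (γ j)
        else bas ((fun p => ξ (τ₂ p)) j) := by
    intro j; rw [if_pos (hsub _)]
  -- named tuple equalities
  have hT1 : tupMV α (fun p => ζ (σ₁ p)) A i (fun s => bif s then X else Y) =
      ctup X Y α (fun j => !(α j)) :=
    tupMV_eq_ctup _ A i _ _ bas _ he₁ hA1 hB₁
  have hTc1X : tupMV α (fun p => ζ (σ₁ p)) A i (fun _ => X) =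
      ctup X Y α (fun j => cbot (σ₁ j)) :=
    tupMV_eq_ctup _ A i _ _ bas _ heX hA1 hBcbot
  have hTc1Y : tupMV α (fun p => ζ (σ₁ p)) A i (fun _ => Y) =
      ctup X Y α (fun j => (fun _ : Fin n => true) (σ₁ j)) :=
    tupMV_eq_ctup _ A i _ _ bas _ heY hA1 hBctop
  have hTdX : tupMV γ (fun p => ξ (τ₂ p)) A i (fun _ => X) =
      ctup X Y γ (fun j => dbot (τ₂ j)) :=
    tupMV_eq_ctup _ A i _ _ bas _ heX hA3 hBdbot
  have hTdY : tupMV γ (fun p => ξ (τ₂ p)) A i (fun _ => Y) =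
      ctup X Y γ (fun j => (fun _ : Fin m => true) (τ₂ j)) :=
    tupMV_eq_ctup _ A i _ _ bas _ heY hA3 hBdtop
  have hT3 : tupMV γ (fun p => ξ (τ₂ p)) A i (fun s => bif s then Y else X) =
      ctup X Y γ (fun j => γ j) :=
    tupMV_eq_ctup _ A i _ _ bas _ he₂ hA3 hBγ
  -- conversions of the outer maps
  have g1X := map_tupMVHom F₁ (fun p => ζ (σ₁ p)) A i f (fun s => bif s then X else Y)
    (fun _ => X) f (𝟙 X) (fun s => !s) (fun _ => false) bas (fun j => !(α j))
    (fun j => cbot (σ₁ j)) (fun j => adm_first (σ₁ := σ₁) f cbot j) he₁ heX hA1 hB₁ hBcbot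
    (by decide) (le_refl _) HEq.rfl HEq.rfl hT1 hTc1X
  have g1Y := map_tupMVHom F₁ (fun p => ζ (σ₁ p)) A i f (fun s => bif s then X else Y)
    (fun _ => Y) (𝟙 Y) f (fun s => !s) (fun _ => true) bas (fun j => !(α j))
    (fun j => (fun _ : Fin n => true) (σ₁ j)) (fun j => adm_first (σ₁ := σ₁) f (fun _ : Fin n => true) j) he₁ heY hA1 hB₁ hBctop
    (le_refl _) (by decide) HEq.rfl HEq.rfl hT1 hTc1Y
  have g3X := map_tupMVHom F₃ (fun p => ξ (τ₂ p)) A i f (fun _ => X)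
    (fun s => bif s then Y else X) (𝟙 X) f (fun _ => false) (fun s => s) bas
    (fun j => dbot (τ₂ j)) (fun j => γ j) (fun j => adm_last (τ₂ := τ₂) f dbot j) heX he₂ hA3 hBdbot hBγ
    (le_refl _) (by decide) HEq.rfl HEq.rfl hTdX hT3
  have g3Y := map_tupMVHom F₃ (fun p => ξ (τ₂ p)) A i f (fun _ => Y)
    (fun s => bif s then Y else X) f (𝟙 Y) (fun _ => true) (fun s => s) bas
    (fun j => (fun _ : Fin m => true) (τ₂ j)) (fun j => γ j) (fun j => adm_last (τ₂ := τ₂) f (fun _ : Fin m => true) j) heY he₂ hA3 hBdtop hBγ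
    (by decide) (le_refl _) HEq.rfl HEq.rfl hTdY hT3
  -- conversions of the two components
  have hargφX : (fun x => upd A i X (ζ x)) = fun x => dval X Y (cbot x) := by
    funext x
    show (if ζ x = i then X else A (ζ x)) = _
    rw [if_pos (hsub _)]
    rfl
  have hargφY : (fun x => upd A i Y (ζ x)) = fun x => dval X Y ((fun _ : Fin n => true) x) := by
    funext x
    show (if ζ x = i then Y else A (ζ x)) = _
    rw [if_pos (hsub _)]
    rfl
  have hargψX : (fun x => upd A i X (ξ x)) = fun x => dval X Y (dbot x) := by
    funext x
    show (if ξ x = i then X else A (ξ x)) = _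
    rw [if_pos (hsub _)]
    rfl
  have hargψY : (fun x => upd A i Y (ξ x)) = fun x => dval X Y ((fun _ : Fin m => true) x) := by
    funext x
    show (if ξ x = i then Y else A (ξ x)) = _
    rw [if_pos (hsub _)]
    rfl
  have gφX := transf_congr φ hargφX
  have gφY := transf_congr φ hargφY
  have gψX := transf_congr ψ hargψX
  have gψY := transf_congr ψ hargψY
  -- the two sides as `Mor`s
  have E1 : F₁.map (tupMVHom α (fun p => ζ (σ₁ p)) A i (fun s => bif s then X else Y)
        (fun _ => X) f (𝟙 X)) ≫
      vcomp φ ψ ζ ξ hcomm (upd A i X) ≫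
      F₃.map (tupMVHom γ (fun p => ξ (τ₂ p)) A i (fun _ => X)
        (fun s => bif s then Y else X) (𝟙 X) f) =
      eqToHom (congrArg F₁.obj hT1) ≫ Mor φ ψ f cbot dbot admBot ≫
        eqToHom (congrArg F₃.obj hT3).symm := by
    unfold Mor
    rw [cHom_eqToHom f β (fun j => cbot (τ₁ j)) (fun j => dbot (σ₂ j)) rfl admBot,
      eqToHom_map F₂]
    simp only [vcomp]
    rw [g1X, gφX, gψX, g3X]
    simp only [Category.assoc, eqToHom_trans_assoc, eqToHom_refl, Category.id_comp,
      Category.comp_id, eqToHom_trans]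
  have E2 : F₁.map (tupMVHom α (fun p => ζ (σ₁ p)) A i (fun s => bif s then X else Y)
        (fun _ => Y) (𝟙 Y) f) ≫
      vcomp φ ψ ζ ξ hcomm (upd A i Y) ≫
      F₃.map (tupMVHom γ (fun p => ξ (τ₂ p)) A i (fun _ => Y)
        (fun s => bif s then Y else X) f (𝟙 Y)) =
      eqToHom (congrArg F₁.obj hT1) ≫ Mor φ ψ f (fun _ : Fin n => true) (fun _ : Fin m => true) (admTop (β := β) (τ₁ := τ₁) (σ₂ := σ₂)) ≫
        eqToHom (congrArg F₃.obj hT3).symm := by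
    unfold Mor
    rw [cHom_eqToHom f β (fun j => (fun _ : Fin n => true) (τ₁ j)) (fun j => (fun _ : Fin m => true) (σ₂ j)) rfl (admTop (β := β) (τ₁ := τ₁) (σ₂ := σ₂)),
      eqToHom_map F₂]
    simp only [vcomp]
    rw [g1Y, gφY, gψY, g3Y]
    simp only [Category.assoc, eqToHom_trans_assoc, eqToHom_refl, Category.id_comp,
      Category.comp_id, eqToHom_trans]
  rw [E1, E2]
  rw [toTop φ ψ hφ hψ f hacyclic (n + m) cbot dbot admBot (by
    have h1 : (Finset.univ.filter fun t : Fin n => cbot t = false).card ≤ n := by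
      calc (Finset.univ.filter fun t : Fin n => cbot t = false).card
          ≤ Finset.univ.card := Finset.card_filter_le _ _
        _ = n := by simp
    have h2 : (Finset.univ.filter fun t : Fin m => dbot t = false).card ≤ m := by
      calc (Finset.univ.filter fun t : Fin m => dbot t = false).card
          ≤ Finset.univ.card := Finset.card_filter_le _ _
        _ = m := by simp
    omega)]
end

section
/- Let B, C be categories, φ : F → G a transformation of type |α| —σ→ n ←τ— |β| and ψ : G → H a transformation of type |β| —η→ m ←θ— |γ|, with the type of ψ∘φ given by a pushout ζ : n → l, ξ : m → l of τ and η. Let i ∈ {1, …, l}. If φ is dinatural in its y-th variable for every y ∈ ζ⁻¹{i}, ψ is dinatural in its z-th variable for every z ∈ ξ⁻¹{i}, and the i-th connected component of the composite graph Γ(ψ) ∘ Γ(φ) is acyclic, then ψ∘φ is dinatural in its i-th variable. -/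
open CategoryTheory Opposite

universe v u v' u'

namespace AcyclicAux

open CategoryTheory

section SignToolkit

variable {B : Type u} [Category.{v} B]

/-- Composition of signed homs. -/
def sComp : ∀ {s : Bool} {P Q R : B}, SignHom s P Q → SignHom s Q R → SignHom s P R
  | true, _, _, _, u, v => u ≫ v
  | false, _, _, _, u, v => v ≫ u

lemma toSignHom_sComp {s : Bool} {P Q R : B} (u : SignHom s P Q) (v : SignHom s Q R) :
    toSignHom (sComp u v) = toSignHom u ≫ toSignHom v := by
  cases s <;> rfl

/-- Cast a signed hom along object equalities. -/
def signCast {s : Bool} {P Q P' Q' : B} (hP : P = P') (hQ : Q = Q')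
    (u : SignHom s P Q) : SignHom s P' Q' := hP ▸ hQ ▸ u

lemma signCast_heq {s : Bool} {P Q P' Q' : B} (hP : P = P') (hQ : Q = Q')
    (u : SignHom s P Q) : HEq (signCast hP hQ u) u := by
  subst hP; subst hQ; rfl

lemma sComp_heq {s : Bool} {P Q R P' Q' R' : B} (hP : P = P') (hQ : Q = Q') (hR : R = R')
    {u : SignHom s P Q} {v : SignHom s Q R} {u' : SignHom s P' Q'} {v' : SignHom s Q' R'}
    (hu : HEq u u') (hv : HEq v v') : HEq (sComp u v) (sComp u' v') := by
  subst hP; subst hQ; subst hR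
  rw [eq_of_heq hu, eq_of_heq hv]

lemma signId_heq {s : Bool} {P P' : B} (h : P = P') :
    HEq (signId s P) (signId s P') := by subst h; rfl

lemma sComp_signId {s : Bool} {P : B} :
    sComp (signId s P) (signId s P) = signId s P := by
  cases s <;> simp [sComp, signId] <;> rfl

lemma toSignHom_signId {s : Bool} (P : B) : toSignHom (signId s P) = 𝟙 (toSign s P) := by
  cases s <;> rfl

/-- values `X` (for `false`) and `Y` (for `true`). -/
abbrev bV (X Y : B) : Bool → B := fun b => bif b then Y else X

/-- the step morphism `𝟙 X`, `f`, or `𝟙 Y`. -/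
def stF {X Y : B} (f : X ⟶ Y) : ∀ b₁ b₂ : Bool, b₁ ≤ b₂ → (bV X Y b₁ ⟶ bV X Y b₂)
  | false, false, _ => 𝟙 X
  | false, true, _ => f
  | true, false, h => absurd h (by decide)
  | true, true, _ => 𝟙 Y

lemma stF_comp {X Y : B} (f : X ⟶ Y) (b₁ b₂ b₃ : Bool) (h : b₁ ≤ b₂) (h' : b₂ ≤ b₃)
    (h'' : b₁ ≤ b₃) : stF f b₁ b₂ h ≫ stF f b₂ b₃ h' = stF f b₁ b₃ h'' := by
  cases b₁ <;> cases b₂ <;> cases b₃ <;>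
    first
      | exact absurd h (by decide)
      | exact absurd h' (by decide)
      | simp [stF]

/-- the signed step morphism. -/
def sStep {X Y : B} (f : X ⟶ Y) :
    ∀ (s : Bool) (b₁ b₂ : Bool), cond s (b₁ ≤ b₂) (b₂ ≤ b₁) → SignHom s (bV X Y b₁) (bV X Y b₂)
  | true, _, _, h => stF f _ _ h
  | false, _, _, h => stF f _ _ h

lemma sComp_sStep {X Y : B} (f : X ⟶ Y) (s b₁ b₂ b₃ : Bool) (h h' h'') :
    sComp (sStep f s b₁ b₂ h) (sStep f s b₂ b₃ h') = sStep f s b₁ b₃ h'' := by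
  cases s
  · exact stF_comp f b₃ b₂ b₁ h' h h''
  · exact stF_comp f b₁ b₂ b₃ h h' h''

lemma sStep_self {X Y : B} (f : X ⟶ Y) (s b : Bool) (h) :
    sStep f s b b h = signId s (bV X Y b) := by
  cases s <;> cases b <;> rfl

end SignToolkit

end AcyclicAux

namespace AcyclicAux

section BusyToolkit

variable {B : Type u} [Category.{v} B] {C : Type u'} [Category.{v'} C]

/-- Master lemma: `F.map` of entrywise-heq morphisms agree up to `eqToHom`. -/
lemma mapEntry {κ : Type} {αv : κ → Bool} (F : PowCat B αv ⥤ C)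
    {p q p' q' : κ → B} (hp : ∀ j, p j = p' j) (hq : ∀ j, q j = q' j)
    (u : ∀ j, SignHom (αv j) (p j) (q j)) (u' : ∀ j, SignHom (αv j) (p' j) (q' j))
    (hu : ∀ j, HEq (u j) (u' j))
    (E₁ : F.obj (fun j => toSign (αv j) (p j)) = F.obj (fun j => toSign (αv j) (p' j)))
    (E₂ : F.obj (fun j => toSign (αv j) (q' j)) = F.obj (fun j => toSign (αv j) (q j))) :
    F.map (fun j => toSignHom (u j)) =
      eqToHom E₁ ≫ F.map (fun j => toSignHom (u' j)) ≫ eqToHom E₂ := by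
  obtain rfl : p = p' := funext hp
  obtain rfl : q = q' := funext hq
  obtain rfl : u = u' := funext fun j => eq_of_heq (hu j)
  simp

variable {l : ℕ} (i : Fin l) (A : Fin l → B) {X Y : B} (f : X ⟶ Y)

/-- The object assigned to an entry over pushout-vertex `g`, carrying value `b` if busy. -/
abbrev sOb (g : Fin l) (b : Bool) : B := if g = i then bV X Y b else A g

/-- The canonical signed hom between busy objects. -/
def sH (s : Bool) (g : Fin l) (b₁ b₂ : Bool)
    (h : g = i → cond s (b₁ ≤ b₂) (b₂ ≤ b₁)) :
    SignHom s (sOb i A (X := X) (Y := Y) g b₁) (sOb i A (X := X) (Y := Y) g b₂) :=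
  if hg : g = i then
    signCast (if_pos hg).symm (if_pos hg).symm (sStep f s b₁ b₂ (h hg))
  else
    signCast (if_neg hg).symm (if_neg hg).symm (signId s (A g))

lemma sH_pos_heq {s : Bool} {g : Fin l} (hg : g = i) {b₁ b₂ : Bool} (h) (h') :
    HEq (sH i A f s g b₁ b₂ h) (sStep f s b₁ b₂ h') := by
  rw [sH, dif_pos hg]
  exact signCast_heq _ _ _

lemma sH_neg_heq {s : Bool} {g : Fin l} (hg : ¬ g = i) {b₁ b₂ : Bool} (h) :
    HEq (sH i A f s g b₁ b₂ h) (signId s (A g)) := by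
  rw [sH, dif_neg hg]
  exact signCast_heq _ _ _

variable {κ : Type} (αv : κ → Bool) (gv : κ → Fin l)

/-- The tuple object with busy values `v`. -/
abbrev TT (v : κ → Bool) : PowCat B αv :=
  fun j => toSign (αv j) (sOb i A (X := X) (Y := Y) (gv j) (v j))

/-- Compatibility of two busy-value functions. -/
def OKv (v v' : κ → Bool) : Prop :=
  ∀ j, gv j = i → cond (αv j) (v j ≤ v' j) (v' j ≤ v j)

/-- The canonical morphism between busy tuples. -/
def TTH (v v' : κ → Bool) (h : OKv i αv gv v v') :
    TT i A (X := X) (Y := Y) αv gv v ⟶ TT i A (X := X) (Y := Y) αv gv v' :=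
  fun j => toSignHom (sH i A f (αv j) (gv j) (v j) (v' j) (h j))

lemma TTH_comp (v₁ v₂ v₃ : κ → Bool) (h h' h'') :
    TTH i A f αv gv v₁ v₂ h ≫ TTH i A f αv gv v₂ v₃ h' =
      TTH i A f αv gv v₁ v₃ h'' := by
  funext j
  show toSignHom _ ≫ toSignHom _ = toSignHom _
  rw [← toSignHom_sComp]
  congr 1
  by_cases hg : gv j = i
  · refine eq_of_heq (HEq.trans (sComp_heq (if_pos hg) (if_pos hg) (if_pos hg)
      (sH_pos_heq i A f hg _ (h j hg)) (sH_pos_heq i A f hg _ (h' j hg))) ?_)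
    rw [sComp_sStep f (αv j) (v₁ j) (v₂ j) (v₃ j) (h j hg) (h' j hg) (h'' j hg)]
    exact (sH_pos_heq i A f hg _ (h'' j hg)).symm
  · refine eq_of_heq (HEq.trans (sComp_heq (if_neg hg) (if_neg hg) (if_neg hg)
      (sH_neg_heq i A f hg _) (sH_neg_heq i A f hg _)) ?_)
    rw [sComp_signId]
    exact (sH_neg_heq i A f hg _).symm

lemma TTH_id (v : κ → Bool) (h) :
    TTH i A f αv gv v v h = 𝟙 (TT i A (X := X) (Y := Y) αv gv v) := by
  funext j
  show toSignHom _ = 𝟙 _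
  rw [← toSignHom_signId (sOb i A (X := X) (Y := Y) (gv j) (v j))]
  congr 1
  by_cases hg : gv j = i
  · refine eq_of_heq (HEq.trans (sH_pos_heq i A f hg _ ?_) ?_)
    · cases αv j <;> exact le_refl _
    · rw [sStep_self]
      exact signId_heq (if_pos hg).symm
  · exact eq_of_heq ((sH_neg_heq i A f hg _).trans (signId_heq (if_neg hg).symm))

end BusyToolkit

end AcyclicAux

namespace AcyclicAux

section TupEntry

variable {B : Type u} [Category.{v} B] {C : Type u'} [Category.{v'} C]

/-- The entry of `tupMVHom` as a signed hom (definitionally equal to the one used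
in `tupMVHom`). -/
def tupEntry {κ ι : Type} [DecidableEq ι] (α : κ → Bool) (σ : κ → ι) (A : ι → B) (i : ι)
    (e₁ e₂ : Bool → B) (g : e₂ false ⟶ e₁ false) (h : e₁ true ⟶ e₂ true) (j : κ) :
    SignHom (α j) (if σ j = i then e₁ (α j) else A (σ j))
      (if σ j = i then e₂ (α j) else A (σ j)) :=
  if hj : σ j = i then by simp only [if_pos hj]; exact mvHom g h (α j)
  else by simp only [if_neg hj]; exact signId (α j) (A (σ j))

lemma tupMVHom_eq {κ ι : Type} [DecidableEq ι] (α : κ → Bool) (σ : κ → ι) (A : ι → B) (i : ι)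
    (e₁ e₂ : Bool → B) (g : e₂ false ⟶ e₁ false) (h : e₁ true ⟶ e₂ true) :
    tupMVHom α σ A i e₁ e₂ g h = fun j => toSignHom (tupEntry α σ A i e₁ e₂ g h j) := rfl

lemma tupEntry_pos_heq {κ ι : Type} [DecidableEq ι] (α : κ → Bool) (σ : κ → ι) (A : ι → B)
    (i : ι) (e₁ e₂ : Bool → B) (g : e₂ false ⟶ e₁ false) (h : e₁ true ⟶ e₂ true) (j : κ)
    (hj : σ j = i) : HEq (tupEntry α σ A i e₁ e₂ g h j) (mvHom g h (α j)) := by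
  rw [tupEntry, dif_pos hj]
  simp only [eq_mpr_eq_cast]
  exact cast_heq _ _

lemma tupEntry_neg_heq {κ ι : Type} [DecidableEq ι] (α : κ → Bool) (σ : κ → ι) (A : ι → B)
    (i : ι) (e₁ e₂ : Bool → B) (g : e₂ false ⟶ e₁ false) (h : e₁ true ⟶ e₂ true) (j : κ)
    (hj : ¬ σ j = i) : HEq (tupEntry α σ A i e₁ e₂ g h j) (signId (α j) (A (σ j))) := by
  rw [tupEntry, dif_neg hj]
  simp only [eq_mpr_eq_cast]
  exact cast_heq _ _

/-- A transformation component, conjugated along an equality of index tuples. -/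
lemma transf_congr {κa κb ι : Type} {α : κa → Bool} {β : κb → Bool}
    {F : PowCat B α ⥤ C} {G : PowCat B β ⥤ C} {σ : κa → ι} {τ : κb → ι}
    (φ : Transf α β F G σ τ) {A₁ A₂ : ι → B} (hA : A₁ = A₂)
    (E₁ : F.obj (tup α σ A₂) = F.obj (tup α σ A₁))
    (E₂ : G.obj (tup β τ A₁) = G.obj (tup β τ A₂)) :
    φ A₁ = eqToHom E₁.symm ≫ φ A₂ ≫ eqToHom E₂.symm := by
  subst hA; simp

end TupEntry

end AcyclicAux

namespace AcyclicAux

section Conv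

variable {B : Type u} [Category.{v} B] {C : Type u'} [Category.{v'} C]

lemma sStep_congr_heq {X Y : B} (f : X ⟶ Y) (s : Bool) {b₁ b₂ b₁' b₂' : Bool}
    (h₁ : b₁ = b₁') (h₂ : b₂ = b₂') (pf pf') :
    HEq (sStep f s b₁ b₂ pf) (sStep f s b₁' b₂' pf') := by
  subst h₁; subst h₂; rfl

variable {l : ℕ} (i : Fin l) (A : Fin l → B) {X Y : B} (f : X ⟶ Y)

lemma convObjAt {κ : Type} {n' : ℕ} (αv : κ → Bool)
    (ζ' : Fin n' → Fin l) (ρ : κ → Fin n') (gv : κ → Fin l)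
    (hgv : ∀ j, gv j = ζ' (ρ j)) (x : Fin n') (hx : ζ' x = i) (cc : Fin n' → Bool)
    (e : Bool → B) (ε : Bool → Bool) (he : ∀ s, e s = bV X Y (ε s))
    (vv : κ → Bool) (hv : ∀ j, vv j = if ρ j = x then ε (αv j) else cc (ρ j)) (j : κ) :
    (if ρ j = x then e (αv j)
      else (fun y => if ζ' y = i then bV X Y (cc y) else A (ζ' y)) (ρ j)) =
      sOb i A (X := X) (Y := Y) (gv j) (vv j) := by
  rw [hv j]
  by_cases hj : ρ j = x
  · rw [if_pos hj, if_pos hj, he (αv j)]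
    show _ = if gv j = i then _ else _
    rw [hgv j, hj, if_pos hx]
  · rw [if_neg hj, if_neg hj]
    show _ = if gv j = i then _ else _
    rw [hgv j]

lemma convObj {κ : Type} {n' : ℕ} (αv : κ → Bool)
    (ζ' : Fin n' → Fin l) (ρ : κ → Fin n') (gv : κ → Fin l)
    (hgv : ∀ j, gv j = ζ' (ρ j)) (x : Fin n') (hx : ζ' x = i) (cc : Fin n' → Bool)
    (e : Bool → B) (ε : Bool → Bool) (he : ∀ s, e s = bV X Y (ε s))
    (vv : κ → Bool) (hv : ∀ j, vv j = if ρ j = x then ε (αv j) else cc (ρ j)) :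
    tupMV αv ρ (fun y => if ζ' y = i then bV X Y (cc y) else A (ζ' y)) x e =
      TT i A (X := X) (Y := Y) αv gv vv :=
  funext fun j => congrArg (toSign (αv j))
    (convObjAt i A αv ζ' ρ gv hgv x hx cc e ε he vv hv j)

/-- The master conversion lemma: a `tupMVHom` over the flip variable `x` equals, up to
`eqToHom` conjugation, a canonical busy-tuple morphism. -/
lemma conv {κ : Type} {n' : ℕ} (αv : κ → Bool) (F : PowCat B αv ⥤ C)
    (ζ' : Fin n' → Fin l) (ρ : κ → Fin n') (gv : κ → Fin l)
    (hgv : ∀ j, gv j = ζ' (ρ j)) (x : Fin n') (hx : ζ' x = i) (cc : Fin n' → Bool)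
    (e₁ e₂ : Bool → B) (ε₁ ε₂ : Bool → Bool)
    (he₁ : ∀ s, e₁ s = bV X Y (ε₁ s)) (he₂ : ∀ s, e₂ s = bV X Y (ε₂ s))
    (g : e₂ false ⟶ e₁ false) (h : e₁ true ⟶ e₂ true)
    (hgle : ε₂ false ≤ ε₁ false) (hhle : ε₁ true ≤ ε₂ true)
    (hgd : HEq g (stF f (ε₂ false) (ε₁ false) hgle))
    (hhd : HEq h (stF f (ε₁ true) (ε₂ true) hhle))
    (v₁ v₂ : κ → Bool)
    (hv₁ : ∀ j, v₁ j = if ρ j = x then ε₁ (αv j) else cc (ρ j))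
    (hv₂ : ∀ j, v₂ j = if ρ j = x then ε₂ (αv j) else cc (ρ j))
    (okk : OKv i αv gv v₁ v₂) :
    F.map (tupMVHom αv ρ (fun y => if ζ' y = i then bV X Y (cc y) else A (ζ' y)) x
        e₁ e₂ g h) =
      eqToHom (congrArg F.obj (convObj i A αv ζ' ρ gv hgv x hx cc e₁ ε₁ he₁ v₁ hv₁)) ≫
        F.map (TTH i A f αv gv v₁ v₂ okk) ≫
        eqToHom (congrArg F.obj
          (convObj i A αv ζ' ρ gv hgv x hx cc e₂ ε₂ he₂ v₂ hv₂)).symm := by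
  refine mapEntry F
    (convObjAt i A αv ζ' ρ gv hgv x hx cc e₁ ε₁ he₁ v₁ hv₁)
    (convObjAt i A αv ζ' ρ gv hgv x hx cc e₂ ε₂ he₂ v₂ hv₂)
    (tupEntry αv ρ (fun y => if ζ' y = i then bV X Y (cc y) else A (ζ' y)) x e₁ e₂ g h)
    (fun j => sH i A f (αv j) (gv j) _ _ (okk j)) (fun j => ?_) _ _
  have h1 := tupEntry_pos_heq αv ρ
    (fun y => if ζ' y = i then bV X Y (cc y) else A (ζ' y)) x e₁ e₂ g h j
  have h1' := tupEntry_neg_heq αv ρ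
    (fun y => if ζ' y = i then bV X Y (cc y) else A (ζ' y)) x e₁ e₂ g h j
  by_cases hj : ρ j = x
  · have hgj : gv j = i := by rw [hgv j, hj, hx]
    have pf2 : cond (αv j) (ε₁ (αv j) ≤ ε₂ (αv j)) (ε₂ (αv j) ≤ ε₁ (αv j)) := by
      cases αv j
      · exact hgle
      · exact hhle
    have h2 := sH_pos_heq i A f hgj (okk j) (okk j hgj)
    have h3 := sStep_congr_heq f (αv j) ((hv₁ j).trans (if_pos hj))
      ((hv₂ j).trans (if_pos hj)) (okk j hgj) pf2
    have h4 : ∀ (s : Bool) (pf : cond s (ε₁ s ≤ ε₂ s) (ε₂ s ≤ ε₁ s)),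
        HEq (mvHom g h s) (sStep f s (ε₁ s) (ε₂ s) pf) := by
      intro s pf
      cases s
      · exact hgd
      · exact hhd
    exact (h1 hj).trans ((h4 (αv j) pf2).trans (h3.symm.trans h2.symm))
  · by_cases hgj : gv j = i
    · have hzi : ζ' (ρ j) = i := (hgv j).symm.trans hgj
      have pf2 : cond (αv j) (cc (ρ j) ≤ cc (ρ j)) (cc (ρ j) ≤ cc (ρ j)) := by
        cases αv j <;> exact le_refl _
      have h2 := sH_pos_heq i A f hgj (okk j) (okk j hgj)
      have h3 : HEq (sStep f (αv j) (v₁ j) (v₂ j) (okk j hgj))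
          (signId (αv j) (bV X Y (cc (ρ j)))) := by
        refine (sStep_congr_heq f (αv j) ((hv₁ j).trans (if_neg hj))
          ((hv₂ j).trans (if_neg hj)) (okk j hgj) pf2).trans ?_
        rw [sStep_self]
      have h4 : HEq
          (signId (αv j) (if ζ' (ρ j) = i then bV X Y (cc (ρ j)) else A (ζ' (ρ j))))
          (signId (αv j) (bV X Y (cc (ρ j)))) := signId_heq (if_pos hzi)
      exact (h1' hj).trans (h4.trans (h3.symm.trans h2.symm))
    · have hzi : ¬ ζ' (ρ j) = i := fun hh => hgj ((hgv j).trans hh)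
      have h2 := sH_neg_heq i A f hgj (okk j)
      have h4 : HEq
          (signId (αv j) (if ζ' (ρ j) = i then bV X Y (cc (ρ j)) else A (ζ' (ρ j))))
          (signId (αv j) (A (gv j))) :=
        signId_heq ((if_neg hzi).trans (congrArg A (hgv j).symm))
      exact (h1' hj).trans (h4.trans h2.symm)

/-- Conjugation rearrangement helper. -/
lemma eq_conj {C : Type u'} [Category.{v'} C] {P Q P' Q' : C} (a : P ⟶ Q) (b : P' ⟶ Q')
    (E₁ : P = P') (E₂ : Q' = Q) (hEq : a = eqToHom E₁ ≫ b ≫ eqToHom E₂) :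
    b = eqToHom E₁.symm ≫ a ≫ eqToHom E₂.symm := by
  subst E₁; subst E₂
  simp only [eqToHom_refl, Category.id_comp, Category.comp_id] at hEq ⊢
  exact hEq.symm

end Conv

end AcyclicAux

namespace AcyclicAux

section Congr

variable {B : Type u} [Category.{v} B] {C : Type u'} [Category.{v'} C]
    {l : ℕ} (i : Fin l) (A : Fin l → B) {X Y : B} (f : X ⟶ Y)

lemma sOb_congr (g : Fin l) {b b' : Bool} (hb : g = i → b = b') :
    sOb i A (X := X) (Y := Y) g b = sOb i A (X := X) (Y := Y) g b' := by
  by_cases hg : g = i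
  · show (if g = i then _ else _) = (if g = i then _ else _)
    rw [if_pos hg, if_pos hg, hb hg]
  · show (if g = i then _ else _) = (if g = i then _ else _)
    rw [if_neg hg, if_neg hg]

lemma sH_congr_heq (s : Bool) (g : Fin l) {b₁ b₂ b₁' b₂' : Bool}
    (hb₁ : g = i → b₁ = b₁') (hb₂ : g = i → b₂ = b₂') (hk) (hk') :
    HEq (sH i A f s g b₁ b₂ hk) (sH i A f s g b₁' b₂' hk') := by
  by_cases hg : g = i
  · exact ((sH_pos_heq i A f hg hk (hk hg)).trans
      (sStep_congr_heq f s (hb₁ hg) (hb₂ hg) (hk hg) (hk' hg))).trans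
      (sH_pos_heq i A f hg hk' (hk' hg)).symm
  · exact (sH_neg_heq i A f hg hk).trans (sH_neg_heq i A f hg hk').symm

lemma TTH_map_congr {κ : Type} (αv : κ → Bool) (gv : κ → Fin l) (F : PowCat B αv ⥤ C)
    (v₁ v₂ v₁' v₂' : κ → Bool)
    (hb₁ : ∀ j, gv j = i → v₁ j = v₁' j) (hb₂ : ∀ j, gv j = i → v₂ j = v₂' j)
    (hk : OKv i αv gv v₁ v₂) (hk' : OKv i αv gv v₁' v₂') :
    F.map (TTH i A f αv gv v₁ v₂ hk) =
      eqToHom (congrArg F.obj (funext fun j =>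
        congrArg (toSign (αv j)) (sOb_congr i A (gv j) (hb₁ j)))) ≫
      F.map (TTH i A f αv gv v₁' v₂' hk') ≫
      eqToHom (congrArg F.obj (funext fun j =>
        congrArg (toSign (αv j)) (sOb_congr i A (gv j) (hb₂ j)))).symm :=
  mapEntry F (fun j => sOb_congr i A (gv j) (hb₁ j))
    (fun j => sOb_congr i A (gv j) (hb₂ j)) _ _
    (fun j => sH_congr_heq i A f (αv j) (gv j) (hb₁ j) (hb₂ j) (hk j) (hk' j)) _ _

end Congr

section Main

variable {B : Type u} [Category.{v} B] {C : Type u'} [Category.{v'} C]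
    {wa wb wc n m l : ℕ}
    {α : Fin wa → Bool} {β : Fin wb → Bool} {γ : Fin wc → Bool}
    {F₁ : PowCat B α ⥤ C} {F₂ : PowCat B β ⥤ C} {F₃ : PowCat B γ ⥤ C}
    {σ₁ : Fin wa → Fin n} {τ₁ : Fin wb → Fin n} {σ₂ : Fin wb → Fin m} {τ₂ : Fin wc → Fin m}
    (φ : Transf α β F₁ F₂ σ₁ τ₁) (ψ : Transf β γ F₂ F₃ σ₂ τ₂)
    (ζ : Fin n → Fin l) (ξ : Fin m → Fin l) (hcomm : ∀ p, ζ (τ₁ p) = ξ (σ₂ p))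
    (i : Fin l) (A : Fin l → B) {X Y : B} (f : X ⟶ Y)

/-- ambient tuple on the `φ` side. -/
abbrev amb1 (c : Fin n → Bool) : Fin n → B :=
  fun x => if ζ x = i then bV X Y (c x) else A (ζ x)

/-- ambient tuple on the `ψ` side. -/
abbrev amb2 (d : Fin m → Bool) : Fin m → B :=
  fun z => if ξ z = i then bV X Y (d z) else A (ξ z)

/-- compatibility of a pair of busy-value assignments. -/
def MID (c : Fin n → Bool) (d : Fin m → Bool) : Prop :=
  OKv i β (fun p => ζ (τ₁ p)) (fun p => c (τ₁ p)) (fun p => d (σ₂ p))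

include hcomm in
lemma mideq (d : Fin m → Bool) :
    TT i A (X := X) (Y := Y) β (fun p => ζ (τ₁ p)) (fun p => d (σ₂ p)) =
      tup β σ₂ (amb2 (ξ := ξ) (i := i) (A := A) (X := X) (Y := Y) d) := by
  funext p
  show toSign (β p) (if ζ (τ₁ p) = i then _ else A (ζ (τ₁ p))) = _
  rw [hcomm p]

lemma okA (v : Fin wa → Bool) :
    OKv i α (fun j => ζ (σ₁ j)) (fun j => !(α j)) v := by
  intro j _
  cases hα : α j <;> simp [hα]

lemma okC (v : Fin wc → Bool) :
    OKv i γ (fun p => ξ (τ₂ p)) (fun p => v p) (fun p => γ p) := by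
  intro p _
  cases hγ : γ p <;> simp [hγ]


/-- The interpolating morphism. -/
def Θ (c : Fin n → Bool) (d : Fin m → Bool) (h : MID (β := β) (τ₁ := τ₁) (σ₂ := σ₂) ζ i c d) :
    F₁.obj (TT i A (X := X) (Y := Y) α (fun j => ζ (σ₁ j)) (fun j => !(α j))) ⟶
      F₃.obj (TT i A (X := X) (Y := Y) γ (fun p => ξ (τ₂ p)) (fun p => γ p)) :=
  F₁.map (TTH i A f α (fun j => ζ (σ₁ j)) (fun j => !(α j)) (fun j => c (σ₁ j))
      (okA ζ i (fun j => c (σ₁ j)))) ≫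
    φ (amb1 ζ i A (X := X) (Y := Y) c) ≫
    F₂.map (TTH i A f β (fun p => ζ (τ₁ p)) (fun p => c (τ₁ p)) (fun p => d (σ₂ p)) h) ≫
    eqToHom (congrArg F₂.obj (mideq ζ ξ hcomm i A (X := X) (Y := Y) d)) ≫
    ψ (amb2 ξ i A (X := X) (Y := Y) d) ≫
    F₃.map (TTH i A f γ (fun p => ξ (τ₂ p)) (fun p => d (τ₂ p)) (fun p => γ p) (okC ξ i (fun p => d (τ₂ p))))

section Steps

include hcomm

lemma theta_step_phi (x : Fin n) (hx : ζ x = i) (hdin : DinatAt φ x)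
    (c : Fin n → Bool) (d : Fin m → Bool) (hcx : c x = false)
    (hm1 : MID (β := β) (τ₁ := τ₁) (σ₂ := σ₂) ζ i c d)
    (hm2 : MID (β := β) (τ₁ := τ₁) (σ₂ := σ₂) ζ i (upd c x true) d) :
    Θ φ ψ ζ ξ hcomm i A f c d hm1 = Θ φ ψ ζ ξ hcomm i A f (upd c x true) d hm2 := by
  classical
  have hex := hdin (fun y => if ζ y = i then bV X Y (c y) else A (ζ y)) f
  have heMix : ∀ s : Bool, (bif s then X else Y) = bV X Y ((fun s => !s) s) := by
    intro s; cases s <;> rfl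
  have heX : ∀ s : Bool, X = bV X Y ((fun _ : Bool => false) s) := fun _ => rfl
  have heY : ∀ s : Bool, Y = bV X Y ((fun _ : Bool => true) s) := fun _ => rfl
  have heMixY : ∀ s : Bool, (bif s then Y else X) = bV X Y ((fun s : Bool => s) s) :=
    fun _ => rfl
  have hvw : ∀ j, (fun j => if σ₁ j = x then !(α j) else c (σ₁ j)) j
      = if σ₁ j = x then (fun s => !s) (α j) else c (σ₁ j) := fun _ => rfl
  have hvcs : ∀ j, (fun j => c (σ₁ j)) j
      = if σ₁ j = x then (fun _ : Bool => false) (α j) else c (σ₁ j) := by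
    intro j; by_cases hj : σ₁ j = x
    · rw [if_pos hj]; show c (σ₁ j) = false; rw [hj, hcx]
    · rw [if_neg hj]
  have hvcs' : ∀ j, (fun j => upd c x true (σ₁ j)) j
      = if σ₁ j = x then (fun _ : Bool => true) (α j) else c (σ₁ j) := by
    intro j; by_cases hj : σ₁ j = x
    · rw [if_pos hj]; show (if σ₁ j = x then true else c (σ₁ j)) = true; rw [if_pos hj]
    · rw [if_neg hj]; show (if σ₁ j = x then true else c (σ₁ j)) = c (σ₁ j); rw [if_neg hj]
  have hvct : ∀ p, (fun p => c (τ₁ p)) p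
      = if τ₁ p = x then (fun _ : Bool => false) (β p) else c (τ₁ p) := by
    intro p; by_cases hp : τ₁ p = x
    · rw [if_pos hp]; show c (τ₁ p) = false; rw [hp, hcx]
    · rw [if_neg hp]
  have hvct' : ∀ p, (fun p => upd c x true (τ₁ p)) p
      = if τ₁ p = x then (fun _ : Bool => true) (β p) else c (τ₁ p) := by
    intro p; by_cases hp : τ₁ p = x
    · rw [if_pos hp]; show (if τ₁ p = x then true else c (τ₁ p)) = true; rw [if_pos hp]
    · rw [if_neg hp]; show (if τ₁ p = x then true else c (τ₁ p)) = c (τ₁ p); rw [if_neg hp]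
  have hvw2 : ∀ p, (fun p => if τ₁ p = x then β p else c (τ₁ p)) p
      = if τ₁ p = x then (fun s : Bool => s) (β p) else c (τ₁ p) := fun _ => rfl
  have ok1 : OKv i α (fun j => ζ (σ₁ j)) (fun j => !(α j))
      (fun j => if σ₁ j = x then !(α j) else c (σ₁ j)) := okA ζ i _
  have okwc : OKv i α (fun j => ζ (σ₁ j))
      (fun j => if σ₁ j = x then !(α j) else c (σ₁ j)) (fun j => c (σ₁ j)) := by
    intro j _
    by_cases hj : σ₁ j = x
    · cases hα : α j <;> simp [hj, hα]
    · simp only [if_neg hj]; cases α j <;> simp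
  have okwc' : OKv i α (fun j => ζ (σ₁ j))
      (fun j => if σ₁ j = x then !(α j) else c (σ₁ j))
      (fun j => upd c x true (σ₁ j)) := by
    intro j _
    by_cases hj : σ₁ j = x
    · cases hα : α j <;> simp [hj, hα]
    · simp only [if_neg hj, upd]; cases α j <;> simp
  have okct : OKv i β (fun p => ζ (τ₁ p)) (fun p => c (τ₁ p))
      (fun p => if τ₁ p = x then β p else c (τ₁ p)) := by
    intro p _
    by_cases hp : τ₁ p = x
    · cases hβ : β p <;> simp [hp, hβ]
    · simp only [if_neg hp]; cases β p <;> simp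
  have okct' : OKv i β (fun p => ζ (τ₁ p)) (fun p => upd c x true (τ₁ p))
      (fun p => if τ₁ p = x then β p else c (τ₁ p)) := by
    intro p _
    by_cases hp : τ₁ p = x
    · cases hβ : β p <;> simp [hp, hβ, upd]
    · simp only [if_neg hp, upd]; cases β p <;> simp
  have okw2d : OKv i β (fun p => ζ (τ₁ p))
      (fun p => if τ₁ p = x then β p else c (τ₁ p)) (fun p => d (σ₂ p)) := by
    intro p hg
    have h1 := hm1 p hg
    have h2 := hm2 p hg
    by_cases hp : τ₁ p = x
    · cases hβ : β p
      · rw [hβ] at h1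
        simp only [cond_false] at h1
        rw [hp, hcx] at h1
        simp [hp, hβ, h1]
      · rw [hβ] at h2
        simp only [cond_true] at h2
        simp only [upd, if_pos hp] at h2
        simp [hp, hβ, h2]
    · simp only [if_neg hp]
      simpa [upd, if_neg hp] using h1
  have hAX : amb1 ζ i A (X := X) (Y := Y) c =
      upd (fun y => if ζ y = i then bV X Y (c y) else A (ζ y)) x X := by
    funext y
    by_cases hy : y = x
    · subst hy; simp [amb1, upd, bV, hx, hcx]
    · show _ = if y = x then X else _
      rw [if_neg hy]
  have hAY : amb1 ζ i A (X := X) (Y := Y) (upd c x true) =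
      upd (fun y => if ζ y = i then bV X Y (c y) else A (ζ y)) x Y := by
    funext y
    by_cases hy : y = x
    · subst hy; simp [amb1, upd, bV, hx]
    · show (if ζ y = i then bV X Y (upd c x true y) else A (ζ y)) = if y = x then Y else _
      rw [if_neg hy]
      show (if ζ y = i then bV X Y (if y = x then true else c y) else A (ζ y)) = _
      rw [if_neg hy]
  have CA1 := eq_conj _ _ _ _ (conv i A f α F₁ ζ σ₁ (fun j => ζ (σ₁ j)) (fun _ => rfl)
    x hx c (fun s => bif s then X else Y) (fun _ => X) (fun s => !s) (fun _ => false)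
    heMix heX f (𝟙 X) (by decide) (by decide) HEq.rfl HEq.rfl
    (fun j => if σ₁ j = x then !(α j) else c (σ₁ j)) (fun j => c (σ₁ j)) hvw hvcs okwc)
  have CA2 := eq_conj _ _ _ _ (conv i A f α F₁ ζ σ₁ (fun j => ζ (σ₁ j)) (fun _ => rfl)
    x hx c (fun s => bif s then X else Y) (fun _ => Y) (fun s => !s) (fun _ => true)
    heMix heY (𝟙 Y) f (by decide) (by decide) HEq.rfl HEq.rfl
    (fun j => if σ₁ j = x then !(α j) else c (σ₁ j)) (fun j => upd c x true (σ₁ j))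
    hvw hvcs' okwc')
  have CB1 := eq_conj _ _ _ _ (conv i A f β F₂ ζ τ₁ (fun p => ζ (τ₁ p)) (fun _ => rfl)
    x hx c (fun _ => X) (fun s => bif s then Y else X) (fun _ => false) (fun s => s)
    heX heMixY (𝟙 X) f (by decide) (by decide) HEq.rfl HEq.rfl
    (fun p => c (τ₁ p)) (fun p => if τ₁ p = x then β p else c (τ₁ p)) hvct hvw2 okct)
  have CB2 := eq_conj _ _ _ _ (conv i A f β F₂ ζ τ₁ (fun p => ζ (τ₁ p)) (fun _ => rfl)
    x hx c (fun _ => Y) (fun s => bif s then Y else X) (fun _ => true) (fun s => s)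
    heY heMixY f (𝟙 Y) (by decide) (by decide) HEq.rfl HEq.rfl
    (fun p => upd c x true (τ₁ p)) (fun p => if τ₁ p = x then β p else c (τ₁ p))
    hvct' hvw2 okct')
  have TC1 := transf_congr φ hAX (by rw [hAX]) (by rw [hAX])
  have TC2 := transf_congr φ hAY (by rw [hAY]) (by rw [hAY])
  unfold Θ
  rw [← TTH_comp i A f α (fun j => ζ (σ₁ j)) (fun j => !(α j))
      (fun j => if σ₁ j = x then !(α j) else c (σ₁ j)) (fun j => c (σ₁ j))
      ok1 okwc (okA ζ i (fun j => c (σ₁ j))),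
    ← TTH_comp i A f α (fun j => ζ (σ₁ j)) (fun j => !(α j))
      (fun j => if σ₁ j = x then !(α j) else c (σ₁ j)) (fun j => upd c x true (σ₁ j))
      ok1 okwc' (okA ζ i (fun j => upd c x true (σ₁ j))),
    ← TTH_comp i A f β (fun p => ζ (τ₁ p)) (fun p => c (τ₁ p))
      (fun p => if τ₁ p = x then β p else c (τ₁ p)) (fun p => d (σ₂ p))
      okct okw2d hm1,
    ← TTH_comp i A f β (fun p => ζ (τ₁ p)) (fun p => upd c x true (τ₁ p))
      (fun p => if τ₁ p = x then β p else c (τ₁ p)) (fun p => d (σ₂ p))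
      okct' okw2d hm2,
    Functor.map_comp, Functor.map_comp, Functor.map_comp, Functor.map_comp,
    CA1, CA2, CB1, CB2, TC1, TC2]
  simp only [Category.assoc, eqToHom_trans, eqToHom_trans_assoc, eqToHom_refl,
    Category.id_comp, Category.comp_id]
  rw [reassoc_of% hex]


lemma theta_step_psi (z : Fin m) (hz : ξ z = i) (hdin : DinatAt ψ z)
    (c : Fin n → Bool) (d : Fin m → Bool) (hdz : d z = false)
    (hm1 : MID (β := β) (τ₁ := τ₁) (σ₂ := σ₂) ζ i c d)
    (hm2 : MID (β := β) (τ₁ := τ₁) (σ₂ := σ₂) ζ i c (upd d z true)) :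
    Θ φ ψ ζ ξ hcomm i A f c d hm1 = Θ φ ψ ζ ξ hcomm i A f c (upd d z true) hm2 := by
  classical
  have hex := hdin (fun y => if ξ y = i then bV X Y (d y) else A (ξ y)) f
  have heMix : ∀ s : Bool, (bif s then X else Y) = bV X Y ((fun s => !s) s) := by
    intro s; cases s <;> rfl
  have heX : ∀ s : Bool, X = bV X Y ((fun _ : Bool => false) s) := fun _ => rfl
  have heY : ∀ s : Bool, Y = bV X Y ((fun _ : Bool => true) s) := fun _ => rfl
  have heMixY : ∀ s : Bool, (bif s then Y else X) = bV X Y ((fun s : Bool => s) s) :=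
    fun _ => rfl
  have hvw3 : ∀ p, (fun p => if σ₂ p = z then !(β p) else d (σ₂ p)) p
      = if σ₂ p = z then (fun s => !s) (β p) else d (σ₂ p) := fun _ => rfl
  have hvds : ∀ p, (fun p => d (σ₂ p)) p
      = if σ₂ p = z then (fun _ : Bool => false) (β p) else d (σ₂ p) := by
    intro p; by_cases hp : σ₂ p = z
    · rw [if_pos hp]; show d (σ₂ p) = false; rw [hp, hdz]
    · rw [if_neg hp]
  have hvds' : ∀ p, (fun p => upd d z true (σ₂ p)) p
      = if σ₂ p = z then (fun _ : Bool => true) (β p) else d (σ₂ p) := by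
    intro p; by_cases hp : σ₂ p = z
    · rw [if_pos hp]; show (if σ₂ p = z then true else d (σ₂ p)) = true; rw [if_pos hp]
    · rw [if_neg hp]; show (if σ₂ p = z then true else d (σ₂ p)) = d (σ₂ p); rw [if_neg hp]
  have hvdt : ∀ p, (fun p => d (τ₂ p)) p
      = if τ₂ p = z then (fun _ : Bool => false) (γ p) else d (τ₂ p) := by
    intro p; by_cases hp : τ₂ p = z
    · rw [if_pos hp]; show d (τ₂ p) = false; rw [hp, hdz]
    · rw [if_neg hp]
  have hvdt' : ∀ p, (fun p => upd d z true (τ₂ p)) p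
      = if τ₂ p = z then (fun _ : Bool => true) (γ p) else d (τ₂ p) := by
    intro p; by_cases hp : τ₂ p = z
    · rw [if_pos hp]; show (if τ₂ p = z then true else d (τ₂ p)) = true; rw [if_pos hp]
    · rw [if_neg hp]; show (if τ₂ p = z then true else d (τ₂ p)) = d (τ₂ p); rw [if_neg hp]
  have hvw4 : ∀ p, (fun p => if τ₂ p = z then γ p else d (τ₂ p)) p
      = if τ₂ p = z then (fun s : Bool => s) (γ p) else d (τ₂ p) := fun _ => rfl
  have okcw3 : OKv i β (fun p => ζ (τ₁ p)) (fun p => c (τ₁ p))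
      (fun p => if σ₂ p = z then !(β p) else d (σ₂ p)) := by
    intro p hg
    have h1 := hm1 p hg
    have h2 := hm2 p hg
    by_cases hp : σ₂ p = z
    · cases hβ : β p
      · rw [hβ] at h2
        simp only [cond_false] at h2
        simp only [upd, if_pos hp] at h2
        simp [hp, hβ, h2]
      · rw [hβ] at h1
        simp only [cond_true] at h1
        rw [hp, hdz] at h1
        simp [hp, hβ, h1]
    · simp only [if_neg hp]
      exact h1
  have okw3d : OKv i β (fun p => ζ (τ₁ p))
      (fun p => if σ₂ p = z then !(β p) else d (σ₂ p)) (fun p => d (σ₂ p)) := by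
    intro p _
    by_cases hp : σ₂ p = z
    · cases hβ : β p <;> simp [hp, hβ, hdz]
    · simp only [if_neg hp]; cases β p <;> simp
  have okw3d' : OKv i β (fun p => ζ (τ₁ p))
      (fun p => if σ₂ p = z then !(β p) else d (σ₂ p))
      (fun p => upd d z true (σ₂ p)) := by
    intro p _
    by_cases hp : σ₂ p = z
    · cases hβ : β p <;> simp [hp, hβ, upd]
    · simp only [if_neg hp, upd]; cases β p <;> simp
  have okdw4 : OKv i γ (fun p => ξ (τ₂ p)) (fun p => d (τ₂ p))
      (fun p => if τ₂ p = z then γ p else d (τ₂ p)) := by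
    intro p _
    by_cases hp : τ₂ p = z
    · cases hγ : γ p <;> simp [hp, hγ, hdz]
    · simp only [if_neg hp]; cases γ p <;> simp
  have okdw4' : OKv i γ (fun p => ξ (τ₂ p)) (fun p => upd d z true (τ₂ p))
      (fun p => if τ₂ p = z then γ p else d (τ₂ p)) := by
    intro p _
    by_cases hp : τ₂ p = z
    · cases hγ : γ p <;> simp [hp, hγ, upd]
    · simp only [if_neg hp, upd]; cases γ p <;> simp
  have okw4C : OKv i γ (fun p => ξ (τ₂ p))
      (fun p => if τ₂ p = z then γ p else d (τ₂ p)) (fun p => γ p) := by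
    intro p _
    by_cases hp : τ₂ p = z
    · cases hγ : γ p <;> simp [hp, hγ]
    · simp only [if_neg hp]; cases γ p <;> simp
  have hBX : amb2 ξ i A (X := X) (Y := Y) d =
      upd (fun y => if ξ y = i then bV X Y (d y) else A (ξ y)) z X := by
    funext y
    by_cases hy : y = z
    · subst hy; simp [amb2, upd, bV, hz, hdz]
    · show _ = if y = z then X else _
      rw [if_neg hy]
  have hBY : amb2 ξ i A (X := X) (Y := Y) (upd d z true) =
      upd (fun y => if ξ y = i then bV X Y (d y) else A (ξ y)) z Y := by
    funext y
    by_cases hy : y = z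
    · subst hy; simp [amb2, upd, bV, hz]
    · show (if ξ y = i then bV X Y (upd d z true y) else A (ξ y)) = if y = z then Y else _
      rw [if_neg hy]
      show (if ξ y = i then bV X Y (if y = z then true else d y) else A (ξ y)) = _
      rw [if_neg hy]
  have CB3 := eq_conj _ _ _ _ (conv i A f β F₂ ξ σ₂ (fun p => ζ (τ₁ p)) hcomm
    z hz d (fun s => bif s then X else Y) (fun _ => X) (fun s => !s) (fun _ => false)
    heMix heX f (𝟙 X) (by decide) (by decide) HEq.rfl HEq.rfl
    (fun p => if σ₂ p = z then !(β p) else d (σ₂ p)) (fun p => d (σ₂ p))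
    hvw3 hvds okw3d)
  have CB4 := eq_conj _ _ _ _ (conv i A f β F₂ ξ σ₂ (fun p => ζ (τ₁ p)) hcomm
    z hz d (fun s => bif s then X else Y) (fun _ => Y) (fun s => !s) (fun _ => true)
    heMix heY (𝟙 Y) f (by decide) (by decide) HEq.rfl HEq.rfl
    (fun p => if σ₂ p = z then !(β p) else d (σ₂ p)) (fun p => upd d z true (σ₂ p))
    hvw3 hvds' okw3d')
  have CC1 := eq_conj _ _ _ _ (conv i A f γ F₃ ξ τ₂ (fun p => ξ (τ₂ p)) (fun _ => rfl)
    z hz d (fun _ => X) (fun s => bif s then Y else X) (fun _ => false) (fun s => s)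
    heX heMixY (𝟙 X) f (by decide) (by decide) HEq.rfl HEq.rfl
    (fun p => d (τ₂ p)) (fun p => if τ₂ p = z then γ p else d (τ₂ p)) hvdt hvw4 okdw4)
  have CC2 := eq_conj _ _ _ _ (conv i A f γ F₃ ξ τ₂ (fun p => ξ (τ₂ p)) (fun _ => rfl)
    z hz d (fun _ => Y) (fun s => bif s then Y else X) (fun _ => true) (fun s => s)
    heY heMixY f (𝟙 Y) (by decide) (by decide) HEq.rfl HEq.rfl
    (fun p => upd d z true (τ₂ p)) (fun p => if τ₂ p = z then γ p else d (τ₂ p))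
    hvdt' hvw4 okdw4')
  have TD1 := transf_congr ψ hBX (by rw [hBX]) (by rw [hBX])
  have TD2 := transf_congr ψ hBY (by rw [hBY]) (by rw [hBY])
  unfold Θ
  rw [← TTH_comp i A f β (fun p => ζ (τ₁ p)) (fun p => c (τ₁ p))
      (fun p => if σ₂ p = z then !(β p) else d (σ₂ p)) (fun p => d (σ₂ p))
      okcw3 okw3d hm1,
    ← TTH_comp i A f β (fun p => ζ (τ₁ p)) (fun p => c (τ₁ p))
      (fun p => if σ₂ p = z then !(β p) else d (σ₂ p)) (fun p => upd d z true (σ₂ p))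
      okcw3 okw3d' hm2,
    ← TTH_comp i A f γ (fun p => ξ (τ₂ p)) (fun p => d (τ₂ p))
      (fun p => if τ₂ p = z then γ p else d (τ₂ p)) (fun p => γ p)
      okdw4 okw4C (okC ξ i (fun p => d (τ₂ p))),
    ← TTH_comp i A f γ (fun p => ξ (τ₂ p)) (fun p => upd d z true (τ₂ p))
      (fun p => if τ₂ p = z then γ p else d (τ₂ p)) (fun p => γ p)
      okdw4' okw4C (okC ξ i (fun p => upd d z true (τ₂ p))),
    Functor.map_comp, Functor.map_comp, Functor.map_comp, Functor.map_comp,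
    CB3, CB4, CC1, CC2, TD1, TD2]
  simp only [Category.assoc, eqToHom_trans, eqToHom_trans_assoc, eqToHom_refl,
    Category.id_comp, Category.comp_id]
  rw [reassoc_of% hex]


lemma theta_congr (c c' : Fin n → Bool) (d d' : Fin m → Bool)
    (hc : ∀ y, ζ y = i → c y = c' y) (hd : ∀ z, ξ z = i → d z = d' z)
    (h : MID (β := β) (τ₁ := τ₁) (σ₂ := σ₂) ζ i c d)
    (h' : MID (β := β) (τ₁ := τ₁) (σ₂ := σ₂) ζ i c' d') :
    Θ φ ψ ζ ξ hcomm i A f c d h = Θ φ ψ ζ ξ hcomm i A f c' d' h' := by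
  have hamb1 : amb1 ζ i A (X := X) (Y := Y) c = amb1 ζ i A (X := X) (Y := Y) c' := by
    funext y
    by_cases hy : ζ y = i
    · show (if ζ y = i then _ else _) = (if ζ y = i then _ else _)
      rw [if_pos hy, if_pos hy, hc y hy]
    · show (if ζ y = i then _ else _) = (if ζ y = i then _ else _)
      rw [if_neg hy, if_neg hy]
  have hamb2 : amb2 ξ i A (X := X) (Y := Y) d = amb2 ξ i A (X := X) (Y := Y) d' := by
    funext y
    by_cases hy : ξ y = i
    · show (if ξ y = i then _ else _) = (if ξ y = i then _ else _)
      rw [if_pos hy, if_pos hy, hd y hy]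
    · show (if ξ y = i then _ else _) = (if ξ y = i then _ else _)
      rw [if_neg hy, if_neg hy]
  have TTA := TTH_map_congr i A f α (fun j => ζ (σ₁ j)) F₁
    (fun j => !(α j)) (fun j => c (σ₁ j)) (fun j => !(α j)) (fun j => c' (σ₁ j))
    (fun _ _ => rfl) (fun j hg => hc (σ₁ j) hg)
    (okA ζ i (fun j => c (σ₁ j))) (okA ζ i (fun j => c' (σ₁ j)))
  have TTB := TTH_map_congr i A f β (fun p => ζ (τ₁ p)) F₂
    (fun p => c (τ₁ p)) (fun p => d (σ₂ p)) (fun p => c' (τ₁ p)) (fun p => d' (σ₂ p))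
    (fun p hg => hc (τ₁ p) hg) (fun p hg => hd (σ₂ p) ((hcomm p) ▸ hg)) h h'
  have TTC := TTH_map_congr i A f γ (fun p => ξ (τ₂ p)) F₃
    (fun p => d (τ₂ p)) (fun p => γ p) (fun p => d' (τ₂ p)) (fun p => γ p)
    (fun p hg => hd (τ₂ p) hg) (fun _ _ => rfl)
    (okC ξ i (fun p => d (τ₂ p))) (okC ξ i (fun p => d' (τ₂ p)))
  have TE1 := transf_congr φ hamb1 (by rw [hamb1]) (by rw [hamb1])
  have TE2 := transf_congr ψ hamb2 (by rw [hamb2]) (by rw [hamb2])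
  unfold Θ
  rw [TTA, TTB, TTC, TE1, TE2]
  simp only [Category.assoc, eqToHom_trans, eqToHom_trans_assoc, eqToHom_refl,
    Category.id_comp, Category.comp_id]

end Steps

end Main

end AcyclicAux

namespace AcyclicAux

section Comb

/-- Maximal element for a transitive relation irreflexive on a finite set. -/
lemma exists_max_of {σt : Type} (r : σt → σt → Prop) (htr : Transitive r)
    (s : Finset σt) (hirr : ∀ a ∈ s, ¬ r a a) (hne : s.Nonempty) :
    ∃ a ∈ s, ∀ b ∈ s, ¬ r a b := by
  classical
  induction s using Finset.strongInduction with
  | _ s ih =>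
    obtain ⟨a, ha⟩ := hne
    by_cases hmax : ∀ b ∈ s, ¬ r a b
    · exact ⟨a, ha, hmax⟩
    · push_neg at hmax
      obtain ⟨b, hb, hab⟩ := hmax
      have hanot : a ∉ s.filter (fun y => r a y) := by
        simp only [Finset.mem_filter]
        exact fun hh => hirr a ha hh.2
      have hss : s.filter (fun y => r a y) ⊂ s :=
        Finset.ssubset_iff_of_subset (Finset.filter_subset _ _) |>.mpr
          ⟨a, ha, hanot⟩
      have hne' : (s.filter (fun y => r a y)).Nonempty :=
        ⟨b, Finset.mem_filter.mpr ⟨hb, hab⟩⟩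
      obtain ⟨cm, hc1, hc2⟩ := ih _ hss
        (fun y hy => hirr y (Finset.filter_subset _ _ hy)) hne'
      refine ⟨cm, Finset.filter_subset _ _ hc1, fun b' hb' hcb' => ?_⟩
      exact hc2 b' (Finset.mem_filter.mpr
        ⟨hb', htr (Finset.mem_filter.mp hc1).2 hcb'⟩) hcb'

variable {wb n m : ℕ}

/-- The relation between transitions induced by middle places. -/
def Rt (β : Fin wb → Bool) (τ₁ : Fin wb → Fin n) (σ₂ : Fin wb → Fin m) :
    (Fin n ⊕ Fin m) → (Fin n ⊕ Fin m) → Prop := fun u w =>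
  ∃ p : Fin wb, (u = Sum.inl (τ₁ p) ∧ w = Sum.inr (σ₂ p) ∧ β p = true) ∨
    (u = Sum.inr (σ₂ p) ∧ w = Sum.inl (τ₁ p) ∧ β p = false)

/-- Embedding of transitions into composite graph vertices. -/
def embT {wa wc : ℕ} : (Fin n ⊕ Fin m) → CGV wa wb wc n m :=
  Sum.elim (fun x => Sum.inr (Sum.inl x)) (fun z => Sum.inr (Sum.inr z))

lemma rt_to_arc {wa wc : ℕ} (α : Fin wa → Bool) (β : Fin wb → Bool) (γ : Fin wc → Bool)
    (σ₁ : Fin wa → Fin n) (τ₁ : Fin wb → Fin n) (σ₂ : Fin wb → Fin m)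
    (τ₂ : Fin wc → Fin m) {u w : Fin n ⊕ Fin m} (h : Rt β τ₁ σ₂ u w) :
    Relation.TransGen (compArc α β γ σ₁ τ₁ σ₂ τ₂)
      (embT (wa := wa) (wc := wc) u) (embT w) := by
  obtain ⟨p, hcase⟩ := h
  rcases hcase with ⟨hu, hw, hβ⟩ | ⟨hu, hw, hβ⟩
  · subst hu; subst hw
    refine Relation.TransGen.head (b := Sum.inl (Sum.inr (Sum.inl p))) ⟨rfl, hβ⟩
      (Relation.TransGen.single ⟨rfl, hβ⟩)
  · subst hu; subst hw
    refine Relation.TransGen.head (b := Sum.inl (Sum.inr (Sum.inl p))) ⟨rfl, hβ⟩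
      (Relation.TransGen.single ⟨rfl, hβ⟩)

lemma transgen_rt {wa wc : ℕ} (α : Fin wa → Bool) (β : Fin wb → Bool) (γ : Fin wc → Bool)
    (σ₁ : Fin wa → Fin n) (τ₁ : Fin wb → Fin n) (σ₂ : Fin wb → Fin m)
    (τ₂ : Fin wc → Fin m) {u w : Fin n ⊕ Fin m}
    (h : Relation.TransGen (Rt β τ₁ σ₂) u w) :
    Relation.TransGen (compArc α β γ σ₁ τ₁ σ₂ τ₂)
      (embT (wa := wa) (wc := wc) u) (embT w) := by
  induction h with
  | single h1 => exact rt_to_arc α β γ σ₁ τ₁ σ₂ τ₂ h1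
  | tail _ h2 ih => exact ih.trans (rt_to_arc α β γ σ₁ τ₁ σ₂ τ₂ h2)

end Comb

end AcyclicAux

namespace AcyclicAux

section MainInd

variable {B : Type u} [Category.{v} B] {C : Type u'} [Category.{v'} C]
    {wa wb wc n m l : ℕ}
    {α : Fin wa → Bool} {β : Fin wb → Bool} {γ : Fin wc → Bool}
    {F₁ : PowCat B α ⥤ C} {F₂ : PowCat B β ⥤ C} {F₃ : PowCat B γ ⥤ C}
    {σ₁ : Fin wa → Fin n} {τ₁ : Fin wb → Fin n} {σ₂ : Fin wb → Fin m} {τ₂ : Fin wc → Fin m}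
    (φ : Transf α β F₁ F₂ σ₁ τ₁) (ψ : Transf β γ F₂ F₃ σ₂ τ₂)
    (ζ : Fin n → Fin l) (ξ : Fin m → Fin l) (hcomm : ∀ p, ζ (τ₁ p) = ξ (σ₂ p))
    (i : Fin l) (A : Fin l → B) {X Y : B} (f : X ⟶ Y)

include hcomm in
lemma theta_to_top
    (hφ : ∀ y, ζ y = i → DinatAt φ y) (hψ : ∀ z, ξ z = i → DinatAt ψ z)
    (hacyclic : ∀ v : CGV wa wb wc n m, compOfV σ₁ τ₁ σ₂ τ₂ ζ ξ v = i →
      ¬ Relation.TransGen (compArc α β γ σ₁ τ₁ σ₂ τ₂) v v)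
    (mtop : MID (β := β) (τ₁ := τ₁) (σ₂ := σ₂) ζ i
      (fun _ => true) (fun _ => true)) :
    ∀ (k : ℕ) (c : Fin n → Bool) (d : Fin m → Bool)
      (h : MID (β := β) (τ₁ := τ₁) (σ₂ := σ₂) ζ i c d),
      ((Finset.univ.filter (fun x : Fin n => ζ x = i ∧ c x = false)).card
        + (Finset.univ.filter (fun z : Fin m => ξ z = i ∧ d z = false)).card = k) →
      Θ φ ψ ζ ξ hcomm i A f c d h =
        Θ φ ψ ζ ξ hcomm i A f (fun _ => true) (fun _ => true) mtop := by
  intro k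
  induction k using Nat.strong_induction_on with
  | _ k ih =>
    intro c d h hcnt
    rcases Nat.eq_zero_or_pos k with hk | hk
    · subst hk
      rw [Nat.add_eq_zero] at hcnt
      have hC : ∀ y, ζ y = i → c y = true := by
        intro y hy
        cases hcc : c y
        · exact absurd (Finset.card_eq_zero.mp hcnt.1 ▸ Finset.mem_filter.mpr
            ⟨Finset.mem_univ _, hy, hcc⟩) (Finset.notMem_empty y)
        · rfl
      have hD : ∀ z, ξ z = i → d z = true := by
        intro z hz
        cases hdd : d z
        · exact absurd (Finset.card_eq_zero.mp hcnt.2 ▸ Finset.mem_filter.mpr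
            ⟨Finset.mem_univ _, hz, hdd⟩) (Finset.notMem_empty z)
        · rfl
      exact theta_congr φ ψ ζ ξ hcomm i A f c _ d _ hC hD h mtop
    · -- inductive step: find a maximal busy-false transition and flip it
      obtain ⟨t, htF, hmax⟩ := exists_max_of (Relation.TransGen (Rt β τ₁ σ₂))
        (fun _ _ _ hab hbc => hab.trans hbc)
        ((Finset.univ.filter (fun x : Fin n => ζ x = i ∧ c x = false)).image Sum.inl ∪
          (Finset.univ.filter
            (fun z : Fin m => ξ z = i ∧ d z = false)).image Sum.inr)
        (by
          intro a haF htg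
          have hmem : Sum.elim (fun x : Fin n => ζ x = i ∧ c x = false)
              (fun z : Fin m => ξ z = i ∧ d z = false) a := by
            cases a <;> simpa using haF
          cases a with
          | inl x =>
            exact hacyclic (embT (Sum.inl x)) hmem.1 (transgen_rt α β γ σ₁ τ₁ σ₂ τ₂ htg)
          | inr z =>
            exact hacyclic (embT (Sum.inr z)) hmem.1 (transgen_rt α β γ σ₁ τ₁ σ₂ τ₂ htg))
        (by
          by_contra hemp
          rw [Finset.not_nonempty_iff_eq_empty, Finset.union_eq_empty,
            Finset.image_eq_empty, Finset.image_eq_empty] at hemp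
          rw [hemp.1, hemp.2] at hcnt
          simp at hcnt
          omega)
      cases t with
      | inl x =>
        have hmem : ζ x = i ∧ c x = false := by simpa using htF
        have hm2 : MID (β := β) (τ₁ := τ₁) (σ₂ := σ₂) ζ i (upd c x true) d := by
          intro p hg
          by_cases hp : τ₁ p = x
          · cases hβp : β p
            · simp [upd, hp]
            · have hd : d (σ₂ p) = true := by
                cases hdd : d (σ₂ p)
                · exact absurd (Relation.TransGen.single
                    ⟨p, Or.inl ⟨by rw [hp], rfl, hβp⟩⟩)
                    (hmax _ (by
                      simp only [Finset.mem_union, Finset.mem_image,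
                        Finset.mem_filter, Finset.mem_univ, true_and]
                      exact Or.inr ⟨σ₂ p, ⟨(hcomm p).symm.trans hg, hdd⟩, rfl⟩))
                · rfl
              simp [upd, hp, hd]
          · simpa [upd, hp] using h p hg
        rw [theta_step_phi φ ψ ζ ξ hcomm i A f x hmem.1 (hφ x hmem.1) c d hmem.2 h hm2]
        have hfil : Finset.univ.filter
            (fun y : Fin n => ζ y = i ∧ upd c x true y = false) =
            (Finset.univ.filter (fun y : Fin n => ζ y = i ∧ c y = false)).erase x := by
          ext y
          simp only [Finset.mem_filter, Finset.mem_erase, Finset.mem_univ, true_and]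
          by_cases hyx : y = x
          · subst hyx; simp [upd]
          · simp [upd, hyx]
        have hxmem : x ∈ Finset.univ.filter (fun y : Fin n => ζ y = i ∧ c y = false) :=
          Finset.mem_filter.mpr ⟨Finset.mem_univ _, hmem⟩
        refine ih (k - 1) (by omega) (upd c x true) d hm2 ?_
        rw [hfil, Finset.card_erase_of_mem hxmem]
        have hpos : 0 < (Finset.univ.filter
            (fun y : Fin n => ζ y = i ∧ c y = false)).card :=
          Finset.card_pos.mpr ⟨x, hxmem⟩
        omega
      | inr z =>
        have hmem : ξ z = i ∧ d z = false := by simpa using htF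
        have hm2 : MID (β := β) (τ₁ := τ₁) (σ₂ := σ₂) ζ i c (upd d z true) := by
          intro p hg
          by_cases hp : σ₂ p = z
          · cases hβp : β p
            · have hc : c (τ₁ p) = true := by
                cases hcc : c (τ₁ p)
                · exact absurd (Relation.TransGen.single
                    ⟨p, Or.inr ⟨by rw [hp], rfl, hβp⟩⟩)
                    (hmax _ (by
                      simp only [Finset.mem_union, Finset.mem_image,
                        Finset.mem_filter, Finset.mem_univ, true_and]
                      exact Or.inl ⟨τ₁ p, ⟨hg, hcc⟩, rfl⟩))
                · rfl
              simp [upd, hp, hc]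
            · simp [upd, hp]
          · simpa [upd, hp] using h p hg
        rw [theta_step_psi φ ψ ζ ξ hcomm i A f z hmem.1 (hψ z hmem.1) c d hmem.2 h hm2]
        have hfil : Finset.univ.filter
            (fun y : Fin m => ξ y = i ∧ upd d z true y = false) =
            (Finset.univ.filter (fun y : Fin m => ξ y = i ∧ d y = false)).erase z := by
          ext y
          simp only [Finset.mem_filter, Finset.mem_erase, Finset.mem_univ, true_and]
          by_cases hyz : y = z
          · subst hyz; simp [upd]
          · simp [upd, hyz]
        have hzmem : z ∈ Finset.univ.filter (fun y : Fin m => ξ y = i ∧ d y = false) :=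
          Finset.mem_filter.mpr ⟨Finset.mem_univ _, hmem⟩
        refine ih (k - 1) (by omega) c (upd d z true) hm2 ?_
        rw [hfil, Finset.card_erase_of_mem hzmem]
        have hpos : 0 < (Finset.univ.filter
            (fun y : Fin m => ξ y = i ∧ d y = false)).card :=
          Finset.card_pos.mpr ⟨z, hzmem⟩
        omega

end MainInd

end AcyclicAux

open AcyclicAux in
theorem vcomp_dinatural_of_acyclic_component'
    {B : Type u} [Category.{v} B] {C : Type u'} [Category.{v'} C]
    {wa wb wc n m l : ℕ}
    {α : Fin wa → Bool} {β : Fin wb → Bool} {γ : Fin wc → Bool}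
    {F₁ : PowCat B α ⥤ C} {F₂ : PowCat B β ⥤ C} {F₃ : PowCat B γ ⥤ C}
    {σ₁ : Fin wa → Fin n} {τ₁ : Fin wb → Fin n} {σ₂ : Fin wb → Fin m} {τ₂ : Fin wc → Fin m}
    (φ : Transf α β F₁ F₂ σ₁ τ₁) (ψ : Transf β γ F₂ F₃ σ₂ τ₂)
    (ζ : Fin n → Fin l) (ξ : Fin m → Fin l)
    (hcomm : ∀ p, ζ (τ₁ p) = ξ (σ₂ p))
    (i : Fin l)
    (hφ : ∀ y, ζ y = i → DinatAt φ y) (hψ : ∀ z, ξ z = i → DinatAt ψ z)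
    (hacyclic : ∀ v : CGV wa wb wc n m, compOfV σ₁ τ₁ σ₂ τ₂ ζ ξ v = i →
      ¬ Relation.TransGen (compArc α β γ σ₁ τ₁ σ₂ τ₂) v v) :
    DinatAt (vcomp φ ψ ζ ξ hcomm) i := by
  intro A X Y f
  have mid0 : MID (β := β) (τ₁ := τ₁) (σ₂ := σ₂) ζ i
      (fun _ => false) (fun _ => false) := by
    intro p _; cases β p <;> exact le_refl _
  have mid1 : MID (β := β) (τ₁ := τ₁) (σ₂ := σ₂) ζ i
      (fun _ => true) (fun _ => true) := by
    intro p _; cases β p <;> exact le_refl _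
  -- object-level equalities for the boundary conversions
  have hp1 : ∀ j, (if ζ (σ₁ j) = i then (fun s => bif s then X else Y) (α j)
      else A (ζ (σ₁ j))) = sOb i A (X := X) (Y := Y) (ζ (σ₁ j)) (!(α j)) := by
    intro j
    by_cases hg : ζ (σ₁ j) = i
    · rw [if_pos hg]
      show _ = if ζ (σ₁ j) = i then _ else _
      rw [if_pos hg]
      cases α j <;> rfl
    · rw [if_neg hg]
      show _ = if ζ (σ₁ j) = i then _ else _
      rw [if_neg hg]
  have hq1X : ∀ j, (if ζ (σ₁ j) = i then (fun _ : Bool => X) (α j)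
      else A (ζ (σ₁ j))) = sOb i A (X := X) (Y := Y) (ζ (σ₁ j))
        ((fun _ : Fin n => false) (σ₁ j)) := by
    intro j
    by_cases hg : ζ (σ₁ j) = i
    · rw [if_pos hg]
      show _ = if ζ (σ₁ j) = i then _ else _
      rw [if_pos hg]
      rfl
    · rw [if_neg hg]
      show _ = if ζ (σ₁ j) = i then _ else _
      rw [if_neg hg]
  have hq1Y : ∀ j, (if ζ (σ₁ j) = i then (fun _ : Bool => Y) (α j)
      else A (ζ (σ₁ j))) = sOb i A (X := X) (Y := Y) (ζ (σ₁ j))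
        ((fun _ : Fin n => true) (σ₁ j)) := by
    intro j
    by_cases hg : ζ (σ₁ j) = i
    · rw [if_pos hg]
      show _ = if ζ (σ₁ j) = i then _ else _
      rw [if_pos hg]
      rfl
    · rw [if_neg hg]
      show _ = if ζ (σ₁ j) = i then _ else _
      rw [if_neg hg]
  have hp3X : ∀ p, (if ξ (τ₂ p) = i then (fun _ : Bool => X) (γ p)
      else A (ξ (τ₂ p))) = sOb i A (X := X) (Y := Y) (ξ (τ₂ p))
        ((fun _ : Fin m => false) (τ₂ p)) := by
    intro p
    by_cases hg : ξ (τ₂ p) = i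
    · rw [if_pos hg]
      show _ = if ξ (τ₂ p) = i then _ else _
      rw [if_pos hg]
      rfl
    · rw [if_neg hg]
      show _ = if ξ (τ₂ p) = i then _ else _
      rw [if_neg hg]
  have hp3Y : ∀ p, (if ξ (τ₂ p) = i then (fun _ : Bool => Y) (γ p)
      else A (ξ (τ₂ p))) = sOb i A (X := X) (Y := Y) (ξ (τ₂ p))
        ((fun _ : Fin m => true) (τ₂ p)) := by
    intro p
    by_cases hg : ξ (τ₂ p) = i
    · rw [if_pos hg]
      show _ = if ξ (τ₂ p) = i then _ else _
      rw [if_pos hg]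
      rfl
    · rw [if_neg hg]
      show _ = if ξ (τ₂ p) = i then _ else _
      rw [if_neg hg]
  have hq3 : ∀ p, (if ξ (τ₂ p) = i then (fun s => bif s then Y else X) (γ p)
      else A (ξ (τ₂ p))) = sOb i A (X := X) (Y := Y) (ξ (τ₂ p)) (γ p) := by
    intro p
    by_cases hg : ξ (τ₂ p) = i
    · rw [if_pos hg]
      show _ = if ξ (τ₂ p) = i then _ else _
      rw [if_pos hg]
    · rw [if_neg hg]
      show _ = if ξ (τ₂ p) = i then _ else _
      rw [if_neg hg]
  have E1 : F₁.obj (tupMV α (fun p => ζ (σ₁ p)) A i (fun s => bif s then X else Y)) =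
      F₁.obj (TT i A (X := X) (Y := Y) α (fun j => ζ (σ₁ j)) (fun j => !(α j))) :=
    congrArg F₁.obj (funext fun j => congrArg (toSign (α j)) (hp1 j))
  have E2X : F₁.obj (TT i A (X := X) (Y := Y) α (fun j => ζ (σ₁ j))
        (fun j => (fun _ : Fin n => false) (σ₁ j))) =
      F₁.obj (tupMV α (fun p => ζ (σ₁ p)) A i (fun _ => X)) :=
    (congrArg F₁.obj (funext fun j => congrArg (toSign (α j)) (hq1X j))).symm
  have E2Y : F₁.obj (TT i A (X := X) (Y := Y) α (fun j => ζ (σ₁ j))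
        (fun j => (fun _ : Fin n => true) (σ₁ j))) =
      F₁.obj (tupMV α (fun p => ζ (σ₁ p)) A i (fun _ => Y)) :=
    (congrArg F₁.obj (funext fun j => congrArg (toSign (α j)) (hq1Y j))).symm
  have E3X : F₃.obj (tupMV γ (fun p => ξ (τ₂ p)) A i (fun _ => X)) =
      F₃.obj (TT i A (X := X) (Y := Y) γ (fun p => ξ (τ₂ p))
        (fun p => (fun _ : Fin m => false) (τ₂ p))) :=
    congrArg F₃.obj (funext fun p => congrArg (toSign (γ p)) (hp3X p))
  have E3Y : F₃.obj (tupMV γ (fun p => ξ (τ₂ p)) A i (fun _ => Y)) =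
      F₃.obj (TT i A (X := X) (Y := Y) γ (fun p => ξ (τ₂ p))
        (fun p => (fun _ : Fin m => true) (τ₂ p))) :=
    congrArg F₃.obj (funext fun p => congrArg (toSign (γ p)) (hp3Y p))
  have E4 : F₃.obj (TT i A (X := X) (Y := Y) γ (fun p => ξ (τ₂ p)) (fun p => γ p)) =
      F₃.obj (tupMV γ (fun p => ξ (τ₂ p)) A i (fun s => bif s then Y else X)) :=
    (congrArg F₃.obj (funext fun p => congrArg (toSign (γ p)) (hq3 p))).symm
  -- entry-level HEqs
  have hu1X : ∀ j, HEq
      (tupEntry α (fun p => ζ (σ₁ p)) A i (fun s => bif s then X else Y)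
        (fun _ => X) f (𝟙 X) j)
      (sH i A f (α j) (ζ (σ₁ j)) (!(α j)) ((fun _ : Fin n => false) (σ₁ j))
        ((okA ζ i (fun j => (fun _ : Fin n => false) (σ₁ j))) j)) := by
    intro j
    by_cases hg : ζ (σ₁ j) = i
    · refine ((tupEntry_pos_heq _ _ _ _ _ _ _ _ j hg).trans ?_).trans
        (sH_pos_heq i A f hg _
          ((okA ζ i (fun j => (fun _ : Fin n => false) (σ₁ j))) j hg)).symm
      have : ∀ (s : Bool) pf, HEq
          (mvHom (e₁ := fun s => bif s then X else Y) (e₂ := fun _ => X) f (𝟙 X) s)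
          (sStep f s (!s) false pf) := by
        intro s pf; cases s
        · exact HEq.rfl
        · exact HEq.rfl
      exact this (α j) _
    · exact (tupEntry_neg_heq _ _ _ _ _ _ _ _ j hg).trans (sH_neg_heq i A f hg _).symm
  have hu1Y : ∀ j, HEq
      (tupEntry α (fun p => ζ (σ₁ p)) A i (fun s => bif s then X else Y)
        (fun _ => Y) (𝟙 Y) f j)
      (sH i A f (α j) (ζ (σ₁ j)) (!(α j)) ((fun _ : Fin n => true) (σ₁ j))
        ((okA ζ i (fun j => (fun _ : Fin n => true) (σ₁ j))) j)) := by
    intro j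
    by_cases hg : ζ (σ₁ j) = i
    · refine ((tupEntry_pos_heq _ _ _ _ _ _ _ _ j hg).trans ?_).trans
        (sH_pos_heq i A f hg _
          ((okA ζ i (fun j => (fun _ : Fin n => true) (σ₁ j))) j hg)).symm
      have : ∀ (s : Bool) pf, HEq
          (mvHom (e₁ := fun s => bif s then X else Y) (e₂ := fun _ => Y) (𝟙 Y) f s)
          (sStep f s (!s) true pf) := by
        intro s pf; cases s
        · exact HEq.rfl
        · exact HEq.rfl
      exact this (α j) _
    · exact (tupEntry_neg_heq _ _ _ _ _ _ _ _ j hg).trans (sH_neg_heq i A f hg _).symm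
  have hu3X : ∀ p, HEq
      (tupEntry γ (fun p => ξ (τ₂ p)) A i (fun _ => X)
        (fun s => bif s then Y else X) (𝟙 X) f p)
      (sH i A f (γ p) (ξ (τ₂ p)) ((fun _ : Fin m => false) (τ₂ p)) (γ p)
        ((okC ξ i (fun p => (fun _ : Fin m => false) (τ₂ p))) p)) := by
    intro p
    by_cases hg : ξ (τ₂ p) = i
    · refine ((tupEntry_pos_heq _ _ _ _ _ _ _ _ p hg).trans ?_).trans
        (sH_pos_heq i A f hg _
          ((okC ξ i (fun p => (fun _ : Fin m => false) (τ₂ p))) p hg)).symm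
      have : ∀ (s : Bool) pf, HEq
          (mvHom (e₁ := fun _ => X) (e₂ := fun s => bif s then Y else X) (𝟙 X) f s)
          (sStep f s false s pf) := by
        intro s pf; cases s
        · exact HEq.rfl
        · exact HEq.rfl
      exact this (γ p) _
    · exact (tupEntry_neg_heq _ _ _ _ _ _ _ _ p hg).trans (sH_neg_heq i A f hg _).symm
  have hu3Y : ∀ p, HEq
      (tupEntry γ (fun p => ξ (τ₂ p)) A i (fun _ => Y)
        (fun s => bif s then Y else X) f (𝟙 Y) p)
      (sH i A f (γ p) (ξ (τ₂ p)) ((fun _ : Fin m => true) (τ₂ p)) (γ p)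
        ((okC ξ i (fun p => (fun _ : Fin m => true) (τ₂ p))) p)) := by
    intro p
    by_cases hg : ξ (τ₂ p) = i
    · refine ((tupEntry_pos_heq _ _ _ _ _ _ _ _ p hg).trans ?_).trans
        (sH_pos_heq i A f hg _
          ((okC ξ i (fun p => (fun _ : Fin m => true) (τ₂ p))) p hg)).symm
      have : ∀ (s : Bool) pf, HEq
          (mvHom (e₁ := fun _ => Y) (e₂ := fun s => bif s then Y else X) f (𝟙 Y) s)
          (sStep f s true s pf) := by
        intro s pf; cases s
        · exact HEq.rfl
        · exact HEq.rfl
      exact this (γ p) _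
    · exact (tupEntry_neg_heq _ _ _ _ _ _ _ _ p hg).trans (sH_neg_heq i A f hg _).symm
  -- the four boundary conversions
  have G1X : F₁.map (tupMVHom α (fun p => ζ (σ₁ p)) A i (fun s => bif s then X else Y)
        (fun _ => X) f (𝟙 X)) =
      eqToHom E1 ≫ F₁.map (TTH i A f α (fun j => ζ (σ₁ j)) (fun j => !(α j))
        (fun j => (fun _ : Fin n => false) (σ₁ j))
        (okA ζ i (fun j => (fun _ : Fin n => false) (σ₁ j)))) ≫ eqToHom E2X :=
    mapEntry F₁ hp1 hq1X _ _ hu1X E1 E2X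
  have G1Y : F₁.map (tupMVHom α (fun p => ζ (σ₁ p)) A i (fun s => bif s then X else Y)
        (fun _ => Y) (𝟙 Y) f) =
      eqToHom E1 ≫ F₁.map (TTH i A f α (fun j => ζ (σ₁ j)) (fun j => !(α j))
        (fun j => (fun _ : Fin n => true) (σ₁ j))
        (okA ζ i (fun j => (fun _ : Fin n => true) (σ₁ j)))) ≫ eqToHom E2Y :=
    mapEntry F₁ hp1 hq1Y _ _ hu1Y E1 E2Y
  have G3X : F₃.map (tupMVHom γ (fun p => ξ (τ₂ p)) A i (fun _ => X)
        (fun s => bif s then Y else X) (𝟙 X) f) =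
      eqToHom E3X ≫ F₃.map (TTH i A f γ (fun p => ξ (τ₂ p))
        (fun p => (fun _ : Fin m => false) (τ₂ p)) (fun p => γ p)
        (okC ξ i (fun p => (fun _ : Fin m => false) (τ₂ p)))) ≫ eqToHom E4 :=
    mapEntry F₃ hp3X hq3 _ _ hu3X E3X E4
  have G3Y : F₃.map (tupMVHom γ (fun p => ξ (τ₂ p)) A i (fun _ => Y)
        (fun s => bif s then Y else X) f (𝟙 Y)) =
      eqToHom E3Y ≫ F₃.map (TTH i A f γ (fun p => ξ (τ₂ p))
        (fun p => (fun _ : Fin m => true) (τ₂ p)) (fun p => γ p)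
        (okC ξ i (fun p => (fun _ : Fin m => true) (τ₂ p)))) ≫ eqToHom E4 :=
    mapEntry F₃ hp3Y hq3 _ _ hu3Y E3Y E4
  -- the middle morphisms are identities for constant states
  have TID0 : TTH i A f β (fun p => ζ (τ₁ p))
      (fun p => (fun _ : Fin n => false) (τ₁ p))
      (fun p => (fun _ : Fin m => false) (σ₂ p)) mid0 =
      𝟙 (TT i A (X := X) (Y := Y) β (fun p => ζ (τ₁ p))
        (fun p => (fun _ : Fin n => false) (τ₁ p))) :=
    TTH_id i A f β _ _ mid0
  have TID1 : TTH i A f β (fun p => ζ (τ₁ p))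
      (fun p => (fun _ : Fin n => true) (τ₁ p))
      (fun p => (fun _ : Fin m => true) (σ₂ p)) mid1 =
      𝟙 (TT i A (X := X) (Y := Y) β (fun p => ζ (τ₁ p))
        (fun p => (fun _ : Fin n => true) (τ₁ p))) :=
    TTH_id i A f β _ _ mid1
  have TH0 : Θ φ ψ ζ ξ hcomm i A f (fun _ => false) (fun _ => false) mid0 =
      F₁.map (TTH i A f α (fun j => ζ (σ₁ j)) (fun j => !(α j))
        (fun j => (fun _ : Fin n => false) (σ₁ j))
        (okA ζ i (fun j => (fun _ : Fin n => false) (σ₁ j)))) ≫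
      φ (amb1 ζ i A (X := X) (Y := Y) (fun _ => false)) ≫
      eqToHom (congrArg F₂.obj
        (mideq ζ ξ hcomm i A (X := X) (Y := Y) (fun _ => false))) ≫
      ψ (amb2 ξ i A (X := X) (Y := Y) (fun _ => false)) ≫
      F₃.map (TTH i A f γ (fun p => ξ (τ₂ p))
        (fun p => (fun _ : Fin m => false) (τ₂ p)) (fun p => γ p)
        (okC ξ i (fun p => (fun _ : Fin m => false) (τ₂ p)))) := by
    unfold Θ
    rw [TID0]
    rw [CategoryTheory.Functor.map_id]
    simp only [Category.id_comp]
  have TH1 : Θ φ ψ ζ ξ hcomm i A f (fun _ => true) (fun _ => true) mid1 =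
      F₁.map (TTH i A f α (fun j => ζ (σ₁ j)) (fun j => !(α j))
        (fun j => (fun _ : Fin n => true) (σ₁ j))
        (okA ζ i (fun j => (fun _ : Fin n => true) (σ₁ j)))) ≫
      φ (amb1 ζ i A (X := X) (Y := Y) (fun _ => true)) ≫
      eqToHom (congrArg F₂.obj
        (mideq ζ ξ hcomm i A (X := X) (Y := Y) (fun _ => true))) ≫
      ψ (amb2 ξ i A (X := X) (Y := Y) (fun _ => true)) ≫
      F₃.map (TTH i A f γ (fun p => ξ (τ₂ p))
        (fun p => (fun _ : Fin m => true) (τ₂ p)) (fun p => γ p)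
        (okC ξ i (fun p => (fun _ : Fin m => true) (τ₂ p)))) := by
    unfold Θ
    rw [TID1]
    rw [CategoryTheory.Functor.map_id]
    simp only [Category.id_comp]
  have KEY : Θ φ ψ ζ ξ hcomm i A f (fun _ => false) (fun _ => false) mid0 =
      Θ φ ψ ζ ξ hcomm i A f (fun _ => true) (fun _ => true) mid1 :=
    theta_to_top φ ψ ζ ξ hcomm i A f hφ hψ hacyclic mid1 _
      (fun _ => false) (fun _ => false) mid0 rfl
  calc
    F₁.map (tupMVHom α (fun p => ζ (σ₁ p)) A i (fun s => bif s then X else Y)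
          (fun _ => X) f (𝟙 X)) ≫
        vcomp φ ψ ζ ξ hcomm (upd A i X) ≫
        F₃.map (tupMVHom γ (fun p => ξ (τ₂ p)) A i (fun _ => X)
          (fun s => bif s then Y else X) (𝟙 X) f) =
        eqToHom E1 ≫ Θ φ ψ ζ ξ hcomm i A f (fun _ => false) (fun _ => false) mid0 ≫
          eqToHom E4 := by
      rw [G1X, G3X, TH0]
      unfold vcomp
      simp only [Category.assoc, eqToHom_refl, Category.id_comp, Category.comp_id]
      rfl
    _ = eqToHom E1 ≫ Θ φ ψ ζ ξ hcomm i A f (fun _ => true) (fun _ => true) mid1 ≫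
          eqToHom E4 := by rw [KEY]
    _ = F₁.map (tupMVHom α (fun p => ζ (σ₁ p)) A i (fun s => bif s then X else Y)
          (fun _ => Y) (𝟙 Y) f) ≫
        vcomp φ ψ ζ ξ hcomm (upd A i Y) ≫
        F₃.map (tupMVHom γ (fun p => ξ (τ₂ p)) A i (fun _ => Y)
          (fun s => bif s then Y else X) f (𝟙 Y)) := by
      rw [G1Y, G3Y, TH1]
      unfold vcomp
      simp only [Category.assoc, eqToHom_refl, Category.id_comp, Category.comp_id]
      rfl

/-- Let `φ : F₁ → F₂` and `ψ : F₂ → F₃` be transformations, with the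
type of `ψ ∘ φ` given by a pushout `ζ, ξ` of `τ₁` and `σ₂`, and let `i` be a variable of
`ψ ∘ φ`.  If `φ` is dinatural in every variable in `ζ⁻¹{i}`, `ψ` is dinatural in every
variable in `ξ⁻¹{i}`, and the `i`-th connected component of the composite graph
`Γ(ψ) ∘ Γ(φ)` is acyclic, then `ψ ∘ φ` is dinatural in its `i`-th variable. -/
theorem vcomp_dinatural_of_acyclic_component
    {B : Type u} [Category.{v} B] {C : Type u'} [Category.{v'} C]
    {wa wb wc n m l : ℕ} (hn : 0 < n) (hm : 0 < m) (hl : 0 < l)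
    {α : Fin wa → Bool} {β : Fin wb → Bool} {γ : Fin wc → Bool}
    {F₁ : PowCat B α ⥤ C} {F₂ : PowCat B β ⥤ C} {F₃ : PowCat B γ ⥤ C}
    {σ₁ : Fin wa → Fin n} {τ₁ : Fin wb → Fin n} {σ₂ : Fin wb → Fin m} {τ₂ : Fin wc → Fin m}
    (φ : Transf α β F₁ F₂ σ₁ τ₁) (ψ : Transf β γ F₂ F₃ σ₂ τ₂)
    (ζ : Fin n → Fin l) (ξ : Fin m → Fin l)
    (hcomm : ∀ p, ζ (τ₁ p) = ξ (σ₂ p))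
    (hpush : ∀ (Z : Type) (u : Fin n → Z) (v : Fin m → Z), (∀ p, u (τ₁ p) = v (σ₂ p)) →
      ∃! w : Fin l → Z, (∀ x, w (ζ x) = u x) ∧ ∀ y, w (ξ y) = v y)
    (i : Fin l)
    (hφ : ∀ y, ζ y = i → DinatAt φ y) (hψ : ∀ z, ξ z = i → DinatAt ψ z)
    (hacyclic : ∀ v : CGV wa wb wc n m, compOfV σ₁ τ₁ σ₂ τ₂ ζ ξ v = i →
      ¬ Relation.TransGen (compArc α β γ σ₁ τ₁ σ₂ τ₂) v v) :
    DinatAt (vcomp φ ψ ζ ξ hcomm) i :=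
  vcomp_dinatural_of_acyclic_component' φ ψ ζ ξ hcomm i hφ hψ hacyclic
end
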